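/- arXiv:2406.13670 — 4 statements merged into one kernel-verified Lean document; each statement's English description precedes it below -/
import Mathlib

section
/- Let 2 ≤ t ≤ n and let Γ_{n,t} be the t-path simplicial tree of the path graph P_n. Then I_{n,t}^{[ν₀(Γ_{n,t})]} has linear quotients. -/
noncomputable section

open Finset MvPolynomial

/-- A simplicial complex on the vertex type `V`: a finite, nonempty collection of
finite subsets of `V` that is closed under taking subsets. -/
structure SimplicialComplex (V : Type) [DecidableEq V] : Type where
  faces : Finset (Finset V)
  nonempty' : faces.Nonempty
  down_closed : ∀ ⦃F G : Finset V⦄, F ∈ faces → G ⊆ F → G ∈ faces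

namespace SimplicialComplex

variable {V : Type} [DecidableEq V]

open scoped Classical in
/-- The facets: the maximal faces with respect to inclusion. -/
def facets (Δ : SimplicialComplex V) : Finset (Finset V) :=
  Δ.faces.filter fun F => ∀ G ∈ Δ.faces, F ⊆ G → F = G

/-- A matching: a set of pairwise disjoint facets. -/
def IsMatching (Δ : SimplicialComplex V) (M : Finset (Finset V)) : Prop :=
  M ⊆ Δ.facets ∧ ∀ F ∈ M, ∀ G ∈ M, F ≠ G → F ∩ G = ∅

/-- The matching number `ν(Δ)`: the maximum cardinality of a matching. -/
def matchingNumber (Δ : SimplicialComplex V) : ℕ :=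
  sSup {r : ℕ | ∃ M : Finset (Finset V), Δ.IsMatching M ∧ M.card = r}

/-- `F` is a leaf of the subcomplex generated by the facet set `S`: either `F` is
the only facet, or there is another facet `G` with `H ∩ F ⊆ G ∩ F` for all
facets `H ≠ F`. -/
def IsLeafIn (S : Finset (Finset V)) (F : Finset V) : Prop :=
  F ∈ S ∧ (S = {F} ∨ ∃ G ∈ S, G ≠ F ∧ ∀ H ∈ S, H ≠ F → H ∩ F ⊆ G ∩ F)

/-- A simplicial forest: every nonempty subcomplex has a leaf (equivalently,
every connected component is a simplicial tree). -/
def IsForest (Δ : SimplicialComplex V) : Prop :=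
  ∀ S ⊆ Δ.facets, S.Nonempty → ∃ F, IsLeafIn S F

/-- Connectedness: any two facets are joined by a chain of facets in which
consecutive facets intersect nontrivially. -/
def Connected (Δ : SimplicialComplex V) : Prop :=
  ∀ F ∈ Δ.facets, ∀ G ∈ Δ.facets,
    Relation.ReflTransGen
      (fun A B => A ∈ Δ.facets ∧ B ∈ Δ.facets ∧ (A ∩ B).Nonempty) F G

/-- A simplicial tree: a connected simplicial forest. -/
def IsTree (Δ : SimplicialComplex V) : Prop := Δ.Connected ∧ Δ.IsForest

/-- A good leaf: a facet which is a leaf of every subcomplex containing it. -/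
def IsGoodLeaf (Δ : SimplicialComplex V) (F : Finset V) : Prop :=
  F ∈ Δ.facets ∧ ∀ S ⊆ Δ.facets, F ∈ S → IsLeafIn S F

/-- Two disjoint facets `F`, `G` form a gap: the induced subcomplex on `F ∪ G`
has facet set exactly `{F, G}`. -/
def FormGap (Δ : SimplicialComplex V) (F G : Finset V) : Prop :=
  F ∈ Δ.facets ∧ G ∈ Δ.facets ∧ F ∩ G = ∅ ∧
    ∀ H ∈ Δ.facets, H ⊆ F ∪ G → H = F ∨ H = G

/-- A restricted matching: a matching one of whose facets forms a gap with every
other facet of the matching. -/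
def IsRestrictedMatching (Δ : SimplicialComplex V) (M : Finset (Finset V)) : Prop :=
  Δ.IsMatching M ∧ ∃ F ∈ M, ∀ G ∈ M, G ≠ F → Δ.FormGap F G

/-- The restricted matching number `ν₀(Δ)`. -/
def restrictedMatchingNumber (Δ : SimplicialComplex V) : ℕ :=
  sSup {r : ℕ | ∃ M : Finset (Finset V), Δ.IsRestrictedMatching M ∧ M.card = r}

/-- An induced matching: a matching `M` such that the facets contained in the
union of the members of `M` are exactly the members of `M`. -/
def IsInducedMatching (Δ : SimplicialComplex V) (M : Finset (Finset V)) : Prop :=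
  Δ.IsMatching M ∧ ∀ H ∈ Δ.facets, H ⊆ M.biUnion id → H ∈ M

/-- The induced matching number `ν₁(Δ)`. -/
def inducedMatchingNumber (Δ : SimplicialComplex V) : ℕ :=
  sSup {r : ℕ | ∃ M : Finset (Finset V), Δ.IsInducedMatching M ∧ M.card = r}

/-- A proper chain of length `n` between the facets `F` and `G`. -/
def ProperChain (Δ : SimplicialComplex V) (F G : Finset V) (n : ℕ) : Prop :=
  ∃ c : ℕ → Finset V, c 0 = F ∧ c n = G ∧ (∀ i ≤ n, c i ∈ Δ.facets) ∧
    ∀ i < n, (c i ∩ c (i + 1)).card = (c (i + 1)).card - 1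

/-- The distance between two facets: the minimal length of a proper chain. -/
def dist (Δ : SimplicialComplex V) (F G : Finset V) : ℕ :=
  sInf {n : ℕ | Δ.ProperChain F G n}

/-- The intersection property for a pure complex whose facets have cardinality
`t` (`= d + 1`): it is connected in codimension 1, and any two facets `F`, `G`
with `|F ∩ G| = t - k` (`1 ≤ k ≤ t`) satisfy `dist(F, G) = k`. -/
def HasIntersectionProperty (Δ : SimplicialComplex V) (t : ℕ) : Prop :=
  (∀ F ∈ Δ.facets, F.card = t) ∧
    (∀ F ∈ Δ.facets, ∀ G ∈ Δ.facets, ∃ n, Δ.ProperChain F G n) ∧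
    ∀ F ∈ Δ.facets, ∀ G ∈ Δ.facets, ∀ k, 1 ≤ k → k ≤ t →
      (F ∩ G).card = t - k → Δ.dist F G = k

end SimplicialComplex

/-- The simplicial complex generated by a finite family of faces. -/
def ofFacets {V : Type} [DecidableEq V] (ℱ : Finset (Finset V)) :
    SimplicialComplex V where
  faces := insert ∅ (ℱ.biUnion Finset.powerset)
  nonempty' := ⟨∅, Finset.mem_insert_self _ _⟩
  down_closed := by
    intro F G hF hGF
    rcases Finset.mem_insert.mp hF with h | h
    · subst h
      exact Finset.mem_insert.mpr <| Or.inl (Finset.subset_empty.mp hGF)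
    · rcases Finset.mem_biUnion.mp h with ⟨A, hA, hFA⟩
      exact Finset.mem_insert.mpr <| Or.inr <| Finset.mem_biUnion.mpr
        ⟨A, hA, Finset.mem_powerset.mpr (hGF.trans (Finset.mem_powerset.mp hFA))⟩

/-- The ideal of `K[x_v : v ∈ V]` generated by the products
`x_{F₁} ⋯ x_{F_k}` over all `k`-matchings `{F₁, …, F_k}` taken from the facet
set `ℱ`.  For `ℱ = ℱ(Δ)` this is the `k`-th squarefree power `I(Δ)^{[k]}` of the
facet ideal `I(Δ)` (and the facet ideal itself for `k = 1`). -/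
def matchPow (K : Type) [Field K] {V : Type} [DecidableEq V]
    (ℱ : Finset (Finset V)) (k : ℕ) : Ideal (MvPolynomial V K) :=
  Ideal.span {p | ∃ M : Finset (Finset V), M ⊆ ℱ ∧
    (∀ F ∈ M, ∀ G ∈ M, F ≠ G → F ∩ G = ∅) ∧ M.card = k ∧
    p = ∏ F ∈ M, ∏ v ∈ F, (X v : MvPolynomial V K)}

/-- The `k`-th squarefree power `I(Δ)^{[k]}` of the facet ideal of `Δ`. -/
def sqfreePower (K : Type) [Field K] {V : Type} [DecidableEq V]
    (Δ : SimplicialComplex V) (k : ℕ) : Ideal (MvPolynomial V K) :=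
  matchPow K Δ.facets k

/-- `p` is a monomial with coefficient `1`. -/
def IsMonomialOne {K : Type} [Field K] {V : Type} (p : MvPolynomial V K) : Prop :=
  ∃ d : V →₀ ℕ, p = monomial d 1

/-- `u` is a minimal monomial generator of the monomial ideal `I`: `u` is a
monomial of `I` which is not strictly divisible by any monomial of `I`. -/
def IsMinGen {K : Type} [Field K] {V : Type} (I : Ideal (MvPolynomial V K))
    (u : MvPolynomial V K) : Prop :=
  IsMonomialOne u ∧ u ∈ I ∧
    ∀ v : MvPolynomial V K, IsMonomialOne v → v ∈ I → v ∣ u → v = u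

/-- A monomial ideal `I` has linear quotients: its minimal monomial generators
can be listed as `f₁, …, f_m` so that each colon ideal
`(f₁, …, f_{i-1}) : (f_i)` is generated by a subset of the variables. -/
def HasLinearQuotients {K : Type} [Field K] {V : Type}
    (I : Ideal (MvPolynomial V K)) : Prop :=
  ∃ L : List (MvPolynomial V K), L.Nodup ∧ (∀ u, u ∈ L ↔ IsMinGen I u) ∧
    ∀ i : ℕ, ∀ hi : i < L.length, 1 ≤ i →
      ∃ s : Set V,
        Submodule.colon (Ideal.span {q | q ∈ L.take i}) (Ideal.span {L.get ⟨i, hi⟩}) =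
          Ideal.span ((fun v => (X v : MvPolynomial V K)) '' s)

/-- The degree of the monomial with exponent vector `d`. -/
def degOf {V : Type} (d : V →₀ ℕ) : ℕ := d.sum fun _ n => n

/-- The edge relation of the induced graph `G_I^{(u,v)}` of Bigdeli–Herzog–Zheng,
for a monomial ideal `I` generated in degree `d`, where `m` is the exponent
vector of `lcm(u, v)`: two minimal monomial generators (identified with their
exponent vectors) dividing `lcm(u, v)` are adjacent when their lcm has degree
`d + 1`. -/
def EdgeRel (K : Type) [Field K] {V : Type} [DecidableEq V]
    (I : Ideal (MvPolynomial V K)) (d : ℕ) (m : V →₀ ℕ) (u v : V →₀ ℕ) : Prop :=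
  IsMinGen I (monomial u (1 : K)) ∧ IsMinGen I (monomial v (1 : K)) ∧
    u ≤ m ∧ v ≤ m ∧ degOf (u ⊔ v) = d + 1

/-- The combinatorial criterion of Bigdeli–Herzog–Zheng for a monomial ideal `I`
generated in degree `d` to be linearly related: any two minimal monomial
generators `u`, `v` are connected by a path in `G_I^{(u,v)}`. -/
def LinearlyRelatedVia (K : Type) [Field K] {V : Type} [DecidableEq V]
    (I : Ideal (MvPolynomial V K)) (d : ℕ) : Prop :=
  ∀ a b : V →₀ ℕ, IsMinGen I (monomial a (1 : K)) → IsMinGen I (monomial b (1 : K)) →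
    Relation.ReflTransGen (EdgeRel K I d (a ⊔ b)) a b

/-- The `t`-path simplicial tree `Γ_{n,t}` of the path graph `P_n` on the
vertices `1, …, n`: its facets are the intervals `F_i = {i, …, i + t - 1}` for
`1 ≤ i ≤ n - t + 1`. -/
def pathFacets (n t : ℕ) : Finset (Finset ℕ) :=
  (Finset.Icc 1 (n - t + 1)).image fun i => Finset.Icc i (i + t - 1)

/-- The `t`-path simplicial tree `Γ_{n,t}` of the path graph `P_n`. -/
def pathComplex (n t : ℕ) : SimplicialComplex ℕ := ofFacets (pathFacets n t)

section Aux
open Function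


-- === copies of the pinned definitions ===



-- === end copies ===

lemma mem_pathFacets {n t : ℕ} {F : Finset ℕ} :
    F ∈ pathFacets n t ↔ ∃ i, 1 ≤ i ∧ i ≤ n - t + 1 ∧ F = Finset.Icc i (i + t - 1) := by
  simp only [pathFacets, Finset.mem_image, Finset.mem_Icc]
  constructor
  · rintro ⟨i, ⟨h1, h2⟩, rfl⟩; exact ⟨i, h1, h2, rfl⟩
  · rintro ⟨i, h1, h2, rfl⟩; exact ⟨i, ⟨h1, h2⟩, rfl⟩

lemma card_Icc_t {i t : ℕ} (ht : 1 ≤ t) (hi : 1 ≤ i) :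
    (Finset.Icc i (i + t - 1)).card = t := by
  rw [Nat.card_Icc]; omega

lemma Icc_start_inj {i j t : ℕ} (ht : 1 ≤ t) (hi : 1 ≤ i) (hj : 1 ≤ j)
    (h : Finset.Icc i (i + t - 1) = Finset.Icc j (j + t - 1)) : i = j := by
  have h1 : i ∈ Finset.Icc j (j + t - 1) := by
    rw [← h]; rw [Finset.mem_Icc]; omega
  have h2 : j ∈ Finset.Icc i (i + t - 1) := by
    rw [h]; rw [Finset.mem_Icc]; omega
  rw [Finset.mem_Icc] at h1 h2
  omega

lemma facets_pathComplex {n t : ℕ} (ht : 1 ≤ t) (htn : t ≤ n) :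
    (pathComplex n t).facets = pathFacets n t := by
  classical
  ext F
  simp only [SimplicialComplex.facets, Finset.mem_filter]
  have hfaces : (pathComplex n t).faces = insert ∅ ((pathFacets n t).biUnion Finset.powerset) :=
    rfl
  constructor
  · rintro ⟨hF, hmax⟩
    rw [hfaces, Finset.mem_insert] at hF
    rcases hF with rfl | hF
    · -- empty face is not maximal
      exfalso
      have h1 : (Finset.Icc 1 (1 + t - 1)) ∈ pathFacets n t := by
        rw [mem_pathFacets]; exact ⟨1, le_refl _, by omega, rfl⟩
      have h2 : (Finset.Icc 1 (1 + t - 1)) ∈ (pathComplex n t).faces := by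
        rw [hfaces]
        exact Finset.mem_insert_of_mem (Finset.mem_biUnion.mpr
          ⟨_, h1, Finset.mem_powerset.mpr (le_refl _)⟩)
      have := hmax _ h2 (Finset.empty_subset _)
      have h3 : (1:ℕ) ∈ Finset.Icc 1 (1 + t - 1) := by rw [Finset.mem_Icc]; omega
      rw [← this] at h3
      exact absurd h3 (Finset.notMem_empty 1)
    · obtain ⟨A, hA, hFA⟩ := Finset.mem_biUnion.mp hF
      rw [Finset.mem_powerset] at hFA
      have hAfaces : A ∈ (pathComplex n t).faces := by
        rw [hfaces]
        exact Finset.mem_insert_of_mem (Finset.mem_biUnion.mpr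
          ⟨_, hA, Finset.mem_powerset.mpr (le_refl _)⟩)
      rw [hmax A hAfaces hFA]
      exact hA
  · intro hF
    obtain ⟨i, hi1, hi2, rfl⟩ := mem_pathFacets.mp hF
    refine ⟨?_, ?_⟩
    · rw [hfaces]
      exact Finset.mem_insert_of_mem (Finset.mem_biUnion.mpr
        ⟨_, hF, Finset.mem_powerset.mpr (le_refl _)⟩)
    · intro G hG hsub
      rw [hfaces, Finset.mem_insert] at hG
      rcases hG with rfl | hG
      · exact Finset.subset_empty.mp hsub
      · obtain ⟨A, hA, hGA⟩ := Finset.mem_biUnion.mp hG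
        rw [Finset.mem_powerset] at hGA
        obtain ⟨j, hj1, hj2, rfl⟩ := mem_pathFacets.mp hA
        have hsub2 : Finset.Icc i (i + t - 1) ⊆ Finset.Icc j (j + t - 1) :=
          hsub.trans hGA
        have hcard : (Finset.Icc j (j+t-1)).card ≤ (Finset.Icc i (i+t-1)).card := by
          rw [card_Icc_t ht hi1, card_Icc_t ht hj1]
        have heq : Finset.Icc i (i + t - 1) = Finset.Icc j (j + t - 1) :=
          Finset.eq_of_subset_of_card_le hsub2 hcard
        exact le_antisymm hsub (heq ▸ hGA)

lemma inter_empty_iff {i j t : ℕ} (ht : 1 ≤ t) :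
    (Finset.Icc i (i+t-1) ∩ Finset.Icc j (j+t-1) = ∅) ↔ (i + t ≤ j ∨ j + t ≤ i) := by
  constructor
  · intro h
    by_contra hc
    push_neg at hc
    have : max i j ∈ Finset.Icc i (i+t-1) ∩ Finset.Icc j (j+t-1) := by
      rw [Finset.mem_inter, Finset.mem_Icc, Finset.mem_Icc]
      omega
    rw [h] at this
    exact absurd this (Finset.notMem_empty _)
  · intro h
    rw [Finset.eq_empty_iff_forall_notMem]
    intro x hx
    rw [Finset.mem_inter, Finset.mem_Icc, Finset.mem_Icc] at hx
    omega

lemma formGap_of_dist {n t i j : ℕ} (ht : 1 ≤ t) (hi1 : 1 ≤ i) (hi2 : i ≤ n - t + 1)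
    (hj1 : 1 ≤ j) (hj2 : j ≤ n - t + 1) (htn : t ≤ n) (hd : i + t + 1 ≤ j) :
    (pathComplex n t).FormGap (Finset.Icc i (i+t-1)) (Finset.Icc j (j+t-1)) := by
  have hfac := facets_pathComplex (n := n) ht htn
  refine ⟨?_, ?_, ?_, ?_⟩
  · rw [hfac, mem_pathFacets]; exact ⟨i, hi1, hi2, rfl⟩
  · rw [hfac, mem_pathFacets]; exact ⟨j, hj1, hj2, rfl⟩
  · rw [inter_empty_iff ht]; omega
  · intro H hH hsub
    rw [hfac, mem_pathFacets] at hH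
    obtain ⟨c, hc1, hc2, rfl⟩ := hH
    -- i + t is not in the union
    have hnotin : (i + t) ∉ Finset.Icc i (i+t-1) ∪ Finset.Icc j (j+t-1) := by
      rw [Finset.mem_union, Finset.mem_Icc, Finset.mem_Icc]
      omega
    have hcases : c + t - 1 < i + t ∨ i + t < c := by
      by_contra hcon
      push_neg at hcon
      exact hnotin (hsub (by rw [Finset.mem_Icc]; omega))
    rcases hcases with h | h
    · left
      apply Finset.eq_of_subset_of_card_le
      · intro x hx
        have hx2 := hsub hx
        rw [Finset.mem_Icc] at hx
        rw [Finset.mem_union, Finset.mem_Icc, Finset.mem_Icc] at hx2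
        rw [Finset.mem_Icc]
        omega
      · rw [card_Icc_t ht hi1, card_Icc_t ht hc1]
    · right
      apply Finset.eq_of_subset_of_card_le
      · intro x hx
        have hx2 := hsub hx
        rw [Finset.mem_Icc] at hx
        rw [Finset.mem_union, Finset.mem_Icc, Finset.mem_Icc] at hx2
        rw [Finset.mem_Icc]
        omega
      · rw [card_Icc_t ht hj1, card_Icc_t ht hc1]

lemma formGap_symm {V : Type} [DecidableEq V] {Δ : SimplicialComplex V} {F G : Finset V}
    (h : Δ.FormGap F G) : Δ.FormGap G F := by
  obtain ⟨h1, h2, h3, h4⟩ := h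
  refine ⟨h2, h1, by rwa [Finset.inter_comm], ?_⟩
  intro H hH hsub
  rcases h4 H hH (by rwa [Finset.union_comm]) with h | h
  · exact Or.inr h
  · exact Or.inl h

lemma dist_of_formGap {n t i j : ℕ} (ht : 2 ≤ t) (htn : t ≤ n)
    (hi1 : 1 ≤ i) (hi2 : i ≤ n - t + 1) (hj1 : 1 ≤ j) (hj2 : j ≤ n - t + 1)
    (h : (pathComplex n t).FormGap (Finset.Icc i (i+t-1)) (Finset.Icc j (j+t-1))) :
    i + t + 1 ≤ j ∨ j + t + 1 ≤ i := by
  have hfac := facets_pathComplex (n := n) (by omega : 1 ≤ t) htn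
  obtain ⟨h1, h2, h3, h4⟩ := h
  rw [inter_empty_iff (by omega)] at h3
  -- suppose the distance is exactly t, derive a contradiction
  by_contra hc
  push_neg at hc
  have hij : i + t = j ∨ j + t = i := by omega
  rcases hij with heq | heq
  · -- middle facet Icc (i+1) (i+t)
    have hmid : Finset.Icc (i+1) ((i+1)+t-1) ∈ (pathComplex n t).facets := by
      rw [hfac, mem_pathFacets]
      exact ⟨i+1, by omega, by omega, rfl⟩
    have hsub : Finset.Icc (i+1) ((i+1)+t-1) ⊆
        Finset.Icc i (i+t-1) ∪ Finset.Icc j (j+t-1) := by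
      intro x hx
      rw [Finset.mem_Icc] at hx
      rw [Finset.mem_union, Finset.mem_Icc, Finset.mem_Icc]
      omega
    rcases h4 _ hmid hsub with h | h
    · have : i ∈ Finset.Icc (i+1) ((i+1)+t-1) := by rw [h, Finset.mem_Icc]; omega
      rw [Finset.mem_Icc] at this; omega
    · have := Icc_start_inj (t := t) (by omega) (by omega) hj1 h
      omega
  · have hmid : Finset.Icc (j+1) ((j+1)+t-1) ∈ (pathComplex n t).facets := by
      rw [hfac, mem_pathFacets]
      exact ⟨j+1, by omega, by omega, rfl⟩
    have hsub : Finset.Icc (j+1) ((j+1)+t-1) ⊆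
        Finset.Icc i (i+t-1) ∪ Finset.Icc j (j+t-1) := by
      intro x hx
      rw [Finset.mem_Icc] at hx
      rw [Finset.mem_union, Finset.mem_Icc, Finset.mem_Icc]
      omega
    rcases h4 _ hmid hsub with h | h
    · have := Icc_start_inj (t := t) (by omega) (by omega) hi1 h
      omega
    · have : j ∈ Finset.Icc (j+1) ((j+1)+t-1) := by rw [h, Finset.mem_Icc]; omega
      rw [Finset.mem_Icc] at this; omega







section Generic
variable {K : Type} [Field K] {V : Type} [DecidableEq V]

lemma degOf_add (a b : V →₀ ℕ) : degOf (a + b) = degOf a + degOf b := by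
  unfold degOf
  exact Finsupp.sum_add_index' (fun _ => rfl) (fun _ _ _ => rfl)

lemma degOf_eq_zero {a : V →₀ ℕ} (h : degOf a = 0) : a = 0 := by
  unfold degOf Finsupp.sum at h
  ext v
  by_cases hv : v ∈ a.support
  · exact (Finset.sum_eq_zero_iff.mp h v hv)
  · simpa using Finsupp.notMem_support_iff.mp hv

lemma eq_of_le_of_degOf_le {a b : V →₀ ℕ} (h : a ≤ b) (hd : degOf b ≤ degOf a) :
    a = b := by
  have hba : b = a + (b - a) := (add_tsub_cancel_of_le h).symm
  have := degOf_add a (b - a)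
  rw [← hba] at this
  have h0 : degOf (b - a) = 0 := by omega
  rw [hba, degOf_eq_zero h0, add_zero]

lemma degOf_mono {a b : V →₀ ℕ} (h : a ≤ b) : degOf a ≤ degOf b := by
  have hba : b = a + (b - a) := (add_tsub_cancel_of_le h).symm
  rw [hba, degOf_add]; omega

theorem generic_linear_quotients (ℓ : List (V →₀ ℕ)) (hnd : ℓ.Nodup) (Dg : ℕ)
    (hdeg : ∀ e ∈ ℓ, degOf e = Dg)
    (hexch : ∀ i : ℕ, ∀ hi : i < ℓ.length, ∀ j : ℕ, ∀ hj : j < i,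
      ∃ v, (ℓ[j]'(hj.trans hi)) v ≠ 0 ∧ (ℓ[i]'hi) v = 0 ∧
        ∃ l : ℕ, ∃ hl : l < i, (ℓ[l]'(hl.trans hi)) ≤ (ℓ[i]'hi) + Finsupp.single v 1) :
    HasLinearQuotients (Ideal.span ((fun e => monomial e (1 : K)) '' {e | e ∈ ℓ})) := by
  classical
  set I : Ideal (MvPolynomial V K) :=
    Ideal.span ((fun e => monomial e (1 : K)) '' {e | e ∈ ℓ}) with hI
  refine ⟨ℓ.map (fun e => monomial e (1 : K)), ?_, ?_, ?_⟩
  · exact hnd.map (monomial_left_injective one_ne_zero)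
  · -- membership ↔ IsMinGen
    intro u
    constructor
    · intro hu
      obtain ⟨e, he, rfl⟩ := List.mem_map.mp hu
      refine ⟨⟨e, rfl⟩, Ideal.subset_span ⟨e, he, rfl⟩, ?_⟩
      rintro v ⟨d, rfl⟩ hvI hdvd
      have hsupp : (monomial d (1:K)).support = {d} := by
        rw [support_monomial, if_neg one_ne_zero]
      obtain ⟨e', he', hle⟩ := mem_ideal_span_monomial_image.mp hvI d (by simp [hsupp])
      have hde : d ≤ e := by
        rcases (monomial_dvd_monomial).mp hdvd with ⟨h1, _⟩
        rcases h1 with h1 | h1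
        · exact absurd h1 one_ne_zero
        · exact h1
      have : d = e := by
        refine eq_of_le_of_degOf_le hde ?_
        have h1 : degOf e' = Dg := hdeg e' he'
        have h2 : degOf e = Dg := hdeg e he
        have := degOf_mono hle
        omega
      rw [this]
    · rintro ⟨⟨d, rfl⟩, huI, hmin⟩
      have hsupp : (monomial d (1:K)).support = {d} := by
        rw [support_monomial, if_neg one_ne_zero]
      obtain ⟨e, he, hle⟩ := mem_ideal_span_monomial_image.mp huI d (by simp [hsupp])
      have heq : monomial e (1:K) = monomial d 1 := by
        refine hmin _ ⟨e, rfl⟩ (Ideal.subset_span ⟨e, he, rfl⟩) ?_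
        exact monomial_dvd_monomial.mpr ⟨Or.inr hle, dvd_refl _⟩
      rw [← heq]
      exact List.mem_map.mpr ⟨e, he, rfl⟩
  · -- colon ideals
    intro i hi h1i
    rw [List.length_map] at hi
    set B : V →₀ ℕ := ℓ[i]'hi with hB
    have hget : (ℓ.map (fun e => monomial e (1 : K))).get ⟨i, by simpa using hi⟩
        = monomial B (1:K) := by
      simp [hB]
    refine ⟨{v | B v = 0 ∧ ∃ e ∈ ℓ.take i, e ≤ B + Finsupp.single v 1}, ?_⟩
    have htake : {q | q ∈ (ℓ.map (fun e => monomial e (1 : K))).take i}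
        = (fun e => monomial e (1:K)) '' {e | e ∈ ℓ.take i} := by
      ext q
      simp only [← List.map_take, List.mem_map, Set.mem_setOf_eq, Set.mem_image]
    rw [hget, htake]
    set Ii : Ideal (MvPolynomial V K) :=
      Ideal.span ((fun e => monomial e (1:K)) '' {e | e ∈ ℓ.take i}) with hIi
    apply le_antisymm
    · -- colon ⊆ span of variables
      intro p hp
      have hpf : p * monomial B 1 ∈ Ii := by
        have := Submodule.mem_colon.mp hp (monomial B 1)
          (Ideal.subset_span (Set.mem_singleton _))
        simpa [smul_eq_mul] using this
      rw [mem_ideal_span_X_image]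
      intro m hm
      have hcoeff : coeff (m + B) (p * monomial B 1) = coeff m p := by
        rw [coeff_mul_monomial, mul_one]
      have hmB : m + B ∈ (p * monomial B 1).support := by
        rw [mem_support_iff, hcoeff]
        exact mem_support_iff.mp hm
      obtain ⟨e, he, hle⟩ := mem_ideal_span_monomial_image.mp hpf (m + B) hmB
      obtain ⟨j, hj, hje⟩ := List.mem_take_iff_getElem.mp he
      have hji : j < i := lt_of_lt_of_le hj (le_trans (min_le_left _ _) le_rfl)
      obtain ⟨v, hv1, hv2, l, hl, hl2⟩ := hexch i hi j hji
      refine ⟨v, ⟨hv2, ℓ[l]'(hl.trans hi), ?_, hl2⟩, ?_⟩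
      · exact List.mem_take_iff_getElem.mpr ⟨l, by omega, rfl⟩
      · have : e v ≤ m v + B v := by
          have := hle v
          simpa using this
        rw [hje] at hv1
        have hBv : B v = 0 := hv2
        intro hmv
        rw [hmv, hBv] at this
        simp at this
        exact hv1 this
    · -- span of variables ⊆ colon
      rw [Ideal.span_le]
      rintro _ ⟨v, ⟨hv0, e, he, hle⟩, rfl⟩
      rw [SetLike.mem_coe, Submodule.mem_colon]
      intro q hq
      obtain ⟨c, rfl⟩ := Ideal.mem_span_singleton'.mp hq
      have hXf : (X v : MvPolynomial V K) * monomial B 1 ∈ Ii := by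
        have hXv : (X v : MvPolynomial V K) = monomial (Finsupp.single v 1) 1 := by
          rw [← X_pow_eq_monomial, pow_one]
        rw [hXv, monomial_mul, one_mul]
        rw [mem_ideal_span_monomial_image]
        intro xi hxi
        rw [support_monomial, if_neg one_ne_zero, Finset.mem_singleton] at hxi
        subst hxi
        exact ⟨e, he, by rwa [add_comm] at hle⟩
      have : (X v : MvPolynomial V K) • (c * monomial B 1)
          = c * ((X v) * monomial B 1) := by rw [smul_eq_mul]; ring
      rw [this]
      exact Ideal.mul_mem_left _ _ hXf

end Generic


section Comb
lemma kmax_mul_le (n t : ℕ) (ht : 1 ≤ t) (htn : t ≤ n) :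
    (max 1 ((n-1)/t)) * t ≤ n := by
  rcases max_cases 1 ((n-1)/t) with ⟨h1, h2⟩ | ⟨h1, h2⟩
  · rw [h1]; omega
  · rw [h1]
    have := Nat.div_mul_le_self (n-1) t
    omega

lemma kmax_mul_ge (n t : ℕ) (ht : 1 ≤ t) (htn : t ≤ n) :
    n ≤ (max 1 ((n-1)/t)) * t + t := by
  have hdm := Nat.div_add_mod (n-1) t
  have hm : (n-1) % t < t := Nat.mod_lt _ (by omega)
  have hc : (n-1)/t * t = t * ((n-1)/t) := Nat.mul_comm _ _
  rcases max_cases 1 ((n-1)/t) with ⟨h1, h2⟩ | ⟨h1, h2⟩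
  · rw [h1]
    have := Nat.mul_le_mul_left t h2
    omega
  · rw [h1]
    omega

def indic (S : Finset ℕ) : ℕ →₀ ℕ := ∑ v ∈ S, Finsupp.single v 1

lemma indic_apply (S : Finset ℕ) (w : ℕ) : indic S w = if w ∈ S then 1 else 0 := by
  classical
  rw [indic, Finset.sum_apply']
  by_cases h : w ∈ S
  · rw [if_pos h, Finset.sum_eq_single_of_mem w h]
    · simp
    · intro b _ hb; exact Finsupp.single_eq_of_ne hb.symm
  · rw [if_neg h, Finset.sum_eq_zero]
    intro b hb
    exact Finsupp.single_eq_of_ne (by rintro rfl; exact h hb)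

lemma degOf_indic (S : Finset ℕ) : (indic S).sum (fun _ n => n) = S.card := by
  classical
  induction S using Finset.induction with
  | empty => simp [indic]
  | @insert a S' h ih =>
    rw [indic, Finset.sum_insert h, ← indic]
    rw [Finsupp.sum_add_index' (fun _ => rfl) (fun _ _ _ => rfl)]
    rw [Finsupp.sum_single_index rfl, ih, Finset.card_insert_of_notMem h]
    omega

lemma monomial_indic_eq_prod (K : Type) [Field K] (S : Finset ℕ) :
    (monomial (indic S) (1:K)) = ∏ v ∈ S, X v := by
  classical
  induction S using Finset.induction with
  | empty => simp [indic]
  | @insert a S' h ih =>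
    rw [Finset.prod_insert h, ← ih, indic, Finset.sum_insert h, ← indic]
    rw [show (X a : MvPolynomial ℕ K) = monomial (Finsupp.single a 1) 1 by
      rw [← X_pow_eq_monomial, pow_one]]
    rw [monomial_mul, one_mul]

end Comb


def Ud (k t : ℕ) (d : Fin k → ℕ) : Finset ℕ :=
  univ.biUnion fun i : Fin k => Icc (1 + (i:ℕ)*t + d i) ((i:ℕ)*t + t + d i)

def Dset (k s : ℕ) : Finset (Fin k → ℕ) :=
  (Fintype.piFinset fun _ => Finset.range (s+1)).filter
    (fun d => ∀ i j : Fin k, i ≤ j → d i ≤ d j)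

lemma mem_Dset {k s : ℕ} {d : Fin k → ℕ} :
    d ∈ Dset k s ↔ (∀ i, d i ≤ s) ∧ Monotone d := by
  simp only [Dset, mem_filter, Fintype.mem_piFinset, Finset.mem_range]
  constructor
  · rintro ⟨h1, h2⟩
    exact ⟨fun i => by have := h1 i; omega, fun i j hij => h2 i j hij⟩
  · rintro ⟨h1, h2⟩
    exact ⟨fun i => by have := h1 i; omega, fun i j hij => h2 hij⟩

lemma mem_Ud {k t : ℕ} {d : Fin k → ℕ} {w : ℕ} :
    w ∈ Ud k t d ↔ ∃ i : Fin k, 1 + (i:ℕ)*t + d i ≤ w ∧ w ≤ (i:ℕ)*t + t + d i := by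
  simp [Ud, Finset.mem_biUnion, Finset.mem_Icc]

def dlt {k : ℕ} (A B : Fin k → ℕ) : Prop :=
  Pi.Lex (· < ·) (@fun _ => (· < ·)) A B

lemma Ud_card {k t s : ℕ} (ht : 1 ≤ t) {d : Fin k → ℕ} (hd : d ∈ Dset k s) :
    (Ud k t d).card = k * t := by
  obtain ⟨hle, hmono⟩ := mem_Dset.mp hd
  rw [Ud, Finset.card_biUnion]
  · rw [Finset.sum_congr rfl (g := fun _ => t)]
    · simp [Finset.card_univ, mul_comm]
    · intro i _
      rw [Nat.card_Icc]
      omega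
  · intro i _ j _ hij
    rw [Function.onFun, Finset.disjoint_left]
    intro w hw1 hw2
    rw [Finset.mem_Icc] at hw1 hw2
    rcases Fin.lt_or_lt_of_ne hij with h | h
    · have h1 : (i:ℕ) + 1 ≤ (j:ℕ) := h
      have h2 : ((i:ℕ)+1) * t ≤ (j:ℕ) * t := Nat.mul_le_mul_right t h1
      have h3 : d i ≤ d j := hmono (le_of_lt h)
      have := hw1.2; have := hw2.1
      nlinarith [hw1.2, hw2.1]
    · have h1 : (j:ℕ) + 1 ≤ (i:ℕ) := h
      have h2 : ((j:ℕ)+1) * t ≤ (i:ℕ) * t := Nat.mul_le_mul_right t h1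
      have h3 : d j ≤ d i := hmono (le_of_lt h)
      nlinarith [hw2.2, hw1.1]

lemma Ud_injective {k t s : ℕ} (ht : 1 ≤ t) {d d' : Fin k → ℕ}
    (hd : d ∈ Dset k s) (hd' : d' ∈ Dset k s) (h : Ud k t d = Ud k t d') : d = d' := by
  obtain ⟨hle, hmono⟩ := mem_Dset.mp hd
  obtain ⟨hle', hmono'⟩ := mem_Dset.mp hd'
  by_contra hne
  -- first index where they differ
  have hex : ∃ i : Fin k, d i ≠ d' i := by
    by_contra hc
    push_neg at hc
    exact hne (funext hc)
  classical
  set T : Finset (Fin k) := univ.filter (fun i => d i ≠ d' i) with hT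
  have hTne : T.Nonempty := by
    obtain ⟨i, hi⟩ := hex
    exact ⟨i, by simp [hT, hi]⟩
  set j : Fin k := T.min' hTne with hj
  have hjT : j ∈ T := T.min'_mem hTne
  have hjd : d j ≠ d' j := (mem_filter.mp hjT).2
  have hagree : ∀ i : Fin k, i < j → d i = d' i := by
    intro i hi
    by_contra hc
    have : j ≤ i := T.min'_le i (by simp [hT, hc])
    exact absurd hi (not_lt.mpr this)
  -- wlog d j < d' j
  have key : ∀ (e e' : Fin k → ℕ), (∀ i, e i ≤ s) → Monotone e →
      (∀ i, e' i ≤ s) → Monotone e' → (∀ i : Fin k, i < j → e i = e' i) →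
      e j < e' j → ¬ (1 + (j:ℕ)*t + e j ∈ Ud k t e') := by
    intro e e' he1 he2 he1' he2' hag hlt hmem
    obtain ⟨i, h1, h2⟩ := mem_Ud.mp hmem
    rcases lt_trichotomy i j with h | h | h
    · have hii : e' i = e i := (hag i h).symm
      have h3 : (i:ℕ) + 1 ≤ (j:ℕ) := h
      have h4 : ((i:ℕ)+1) * t ≤ (j:ℕ) * t := Nat.mul_le_mul_right t h3
      have h5 : e i ≤ e j := he2 (le_of_lt h)
      nlinarith [h2]
    · subst h
      omega
    · have h3 : (j:ℕ) + 1 ≤ (i:ℕ) := h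
      have h4 : ((j:ℕ)+1) * t ≤ (i:ℕ) * t := Nat.mul_le_mul_right t h3
      have h5 : e' j ≤ e' i := he2' (le_of_lt h)
      nlinarith [h1]
  rcases lt_or_gt_of_ne hjd with hc | hc
  · have hmem : 1 + (j:ℕ)*t + d j ∈ Ud k t d := by
      rw [mem_Ud]
      exact ⟨j, by omega, by omega⟩
    rw [h] at hmem
    exact key d d' hle hmono hle' hmono' hagree hc hmem
  · have hmem : 1 + (j:ℕ)*t + d' j ∈ Ud k t d' := by
      rw [mem_Ud]
      exact ⟨j, by omega, by omega⟩
    rw [← h] at hmem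
    exact key d' d hle' hmono' hle hmono (fun i hi => (hagree i hi).symm) hc hmem

lemma exchange {k t s : ℕ} (ht : 1 ≤ t) (hst : s ≤ t) {A B : Fin k → ℕ}
    (hA : A ∈ Dset k s) (hB : B ∈ Dset k s) (hlt : dlt B A) :
    ∃ v, v ∈ Ud k t A ∧ v ∉ Ud k t B ∧
      ∃ C ∈ Dset k s, dlt B C ∧ Ud k t C ⊆ insert v (Ud k t B) := by
  classical
  obtain ⟨hAle, hAmono⟩ := mem_Dset.mp hA
  obtain ⟨hBle, hBmono⟩ := mem_Dset.mp hB
  obtain ⟨j, hj1, hj2⟩ := hlt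
  set T : Finset (Fin k) := univ.filter (fun i => j ≤ i ∧ B i = B j) with hT
  have hTne : T.Nonempty := ⟨j, by simp [hT]⟩
  set l : Fin k := T.max' hTne with hl
  have hlT : l ∈ T := T.max'_mem hTne
  have hjl : j ≤ l := (mem_filter.mp hlT).2.1
  have hBl : B l = B j := (mem_filter.mp hlT).2.2
  have hmax : ∀ i : Fin k, j ≤ i → B i = B j → i ≤ l := fun i h1 h2 =>
    T.le_max' i (by simp [hT, h1, h2])
  have hgt : ∀ i : Fin k, l < i → B j + 1 ≤ B i := by
    intro i hi
    have hji : j ≤ i := le_of_lt (lt_of_le_of_lt hjl hi)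
    have h1 : B j ≤ B i := hBmono hji
    rcases eq_or_lt_of_le h1 with h | h
    · exact absurd (hmax i hji h.symm) (not_le.mpr hi)
    · omega
  have hAl : B j + 1 ≤ A l := le_trans (by omega) (hAmono hjl)
  set v : ℕ := 1 + (l:ℕ)*t + B j + t with hv
  refine ⟨v, ?_, ?_, ?_⟩
  · rw [mem_Ud]
    refine ⟨l, by have := hAle l; omega, by omega⟩
  · rw [mem_Ud]
    rintro ⟨i, h1, h2⟩
    rcases le_or_gt i l with h | h
    · have h3 : (i:ℕ) ≤ (l:ℕ) := h
      have h4 : (i:ℕ) * t ≤ (l:ℕ) * t := Nat.mul_le_mul_right t h3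
      have h5 : B i ≤ B j := hBl ▸ hBmono h
      omega
    · have h3 : (l:ℕ) + 1 ≤ (i:ℕ) := h
      have h4 : ((l:ℕ)+1) * t ≤ (i:ℕ) * t := Nat.mul_le_mul_right t h3
      have h4' : (l:ℕ) * t + t ≤ (i:ℕ) * t := by rw [Nat.succ_mul] at h4; omega
      have h5 : B j + 1 ≤ B i := hgt i h
      omega
  · refine ⟨Function.update B l (B j + 1), ?_, ?_, ?_⟩
    · rw [mem_Dset]
      constructor
      · intro i
        by_cases hne : i = l
        · rw [hne, Function.update_self]
          exact le_trans hAl (hAle l)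
        · rw [Function.update_of_ne hne]
          exact hBle i
      · intro i i' hii'
        by_cases hne : i = l
        · by_cases hne' : i' = l
          · rw [hne, hne']
          · have : l < i' := lt_of_le_of_ne (hne ▸ hii') (Ne.symm hne')
            rw [hne, Function.update_self, Function.update_of_ne hne']
            exact hgt i' this
        · by_cases hne' : i' = l
          · rw [hne', Function.update_of_ne hne, Function.update_self]
            have : B i ≤ B l := hBmono (hne' ▸ hii')
            omega
          · rw [Function.update_of_ne hne, Function.update_of_ne hne']
            exact hBmono hii'
    · refine ⟨l, ?_, ?_⟩
      · intro i hi
        rw [Function.update_of_ne (ne_of_lt hi)]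
      · rw [Function.update_self, hBl]
        omega
    · intro w hw
      obtain ⟨i, h1, h2⟩ := mem_Ud.mp hw
      by_cases hne : i = l
      · rw [hne, Function.update_self] at h1 h2
        rcases eq_or_ne w v with rfl | hwv
        · exact Finset.mem_insert_self _ _
        · refine Finset.mem_insert_of_mem ?_
          rw [mem_Ud]
          refine ⟨l, by omega, by have := hBl; omega⟩
      · rw [Function.update_of_ne hne] at h1 h2
        refine Finset.mem_insert_of_mem ?_
        rw [mem_Ud]
        exact ⟨i, h1, h2⟩


def startOf (F : Finset ℕ) : ℕ := WithTop.untopD 0 (F.min)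

lemma startOf_Icc {i t : ℕ} (ht : 1 ≤ t) : startOf (Finset.Icc i (i + t - 1)) = i := by
  have hmem : i ∈ Finset.Icc i (i + t - 1) := by rw [Finset.mem_Icc]; omega
  have h1 : (Finset.Icc i (i + t - 1)).min ≤ (i : WithTop ℕ) := Finset.min_le hmem
  have h2 : (i : WithTop ℕ) ≤ (Finset.Icc i (i + t - 1)).min := by
    apply Finset.le_min
    intro y hy
    rw [Finset.mem_Icc] at hy
    exact WithTop.coe_le_coe.mpr hy.1
  have : (Finset.Icc i (i + t - 1)).min = (i : WithTop ℕ) := le_antisymm h1 h2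
  rw [startOf, this]
  rfl

section P6

lemma matching_starts {n t : ℕ} (ht : 1 ≤ t) {M : Finset (Finset ℕ)}
    (hM : M ⊆ pathFacets n t) (hdisj : ∀ F ∈ M, ∀ G ∈ M, F ≠ G → F ∩ G = ∅) :
    ∃ S : Finset ℕ, S.card = M.card ∧ (∀ a ∈ S, 1 ≤ a ∧ a ≤ n - t + 1) ∧
      (∀ a ∈ S, ∀ b ∈ S, a ≠ b → a + t ≤ b ∨ b + t ≤ a) ∧
      M = S.image (fun a => Finset.Icc a (a + t - 1)) ∧ S = M.image startOf := by
  classical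
  have hform : ∀ F ∈ M, 1 ≤ startOf F ∧ startOf F ≤ n - t + 1 ∧
      F = Finset.Icc (startOf F) (startOf F + t - 1) := by
    intro F hF
    obtain ⟨i, h1, h2, rfl⟩ := mem_pathFacets.mp (hM hF)
    rw [startOf_Icc ht]
    exact ⟨h1, h2, rfl⟩
  refine ⟨M.image startOf, ?_, ?_, ?_, ?_, rfl⟩
  · apply Finset.card_image_of_injOn
    intro F hF G hG hFG
    rw [(hform F hF).2.2, (hform G hG).2.2, hFG]
  · rintro a ha
    obtain ⟨F, hF, rfl⟩ := Finset.mem_image.mp ha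
    exact ⟨(hform F hF).1, (hform F hF).2.1⟩
  · rintro a ha b hb hab
    obtain ⟨F, hF, rfl⟩ := Finset.mem_image.mp ha
    obtain ⟨G, hG, rfl⟩ := Finset.mem_image.mp hb
    have hFG : F ≠ G := fun h => hab (by rw [h])
    have hie := hdisj F hF G hG hFG
    rw [(hform F hF).2.2, (hform G hG).2.2, inter_empty_iff ht] at hie
    exact hie
  · ext F
    rw [Finset.mem_image]
    constructor
    · intro hF
      exact ⟨startOf F, Finset.mem_image_of_mem _ hF, ((hform F hF).2.2).symm⟩
    · rintro ⟨a, ha, rfl⟩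
      obtain ⟨G, hG, rfl⟩ := Finset.mem_image.mp ha
      rw [← (hform G hG).2.2]
      exact hG

lemma restricted_card_le {n t : ℕ} (ht : 2 ≤ t) (htn : t ≤ n) {M : Finset (Finset ℕ)}
    (hrm : (pathComplex n t).IsRestrictedMatching M) : M.card ≤ max 1 ((n-1)/t) := by
  classical
  obtain ⟨⟨hMfac, hdisj⟩, F0, hF0, hgap⟩ := hrm
  rw [facets_pathComplex (by omega : 1 ≤ t) htn] at hMfac
  by_cases hcard : M.card ≤ 1
  · exact le_trans hcard (le_max_left _ _)
  push_neg at hcard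
  obtain ⟨S, hScard, hSbound, hSdist, hSimg, hSdef⟩ :=
    matching_starts (by omega : 1 ≤ t) hMfac hdisj
  set p := startOf F0 with hp
  obtain ⟨i0, hi01, hi02, hF0i⟩ := mem_pathFacets.mp (hMfac hF0)
  have hpi0 : p = i0 := by rw [hp, hF0i, startOf_Icc (by omega : 1 ≤ t)]
  have hpS : p ∈ S := by rw [hSdef]; exact Finset.mem_image_of_mem _ hF0
  have hpb : 1 ≤ p ∧ p ≤ n - t + 1 := hSbound p hpS
  have hF0form : F0 = Finset.Icc p (p + t - 1) := by rw [hpi0]; exact hF0i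
  -- the special distance property
  have hspec : ∀ q ∈ S, q ≠ p → p + t + 1 ≤ q ∨ q + t + 1 ≤ p := by
    intro q hq hqp
    have hG : Finset.Icc q (q + t - 1) ∈ M := by
      rw [hSimg]; exact Finset.mem_image_of_mem _ hq
    have hqb := hSbound q hq
    have hGne : Finset.Icc q (q + t - 1) ≠ F0 := by
      intro h
      rw [hF0form] at h
      exact hqp (Icc_start_inj (by omega : 1 ≤ t) hqb.1 hpb.1 h)
    have := hgap _ hG hGne
    rw [hF0form] at this
    rcases dist_of_formGap ht htn hpb.1 hpb.2 hqb.1 hqb.2 this with h | h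
    · exact Or.inl h
    · exact Or.inr h
  -- find a missing element w
  have hwex : ∃ w, 1 ≤ w ∧ w ≤ n ∧ ∀ q ∈ S, ¬ (q ≤ w ∧ w ≤ q + t - 1) := by
    by_cases hex : ∃ r ∈ S, p < r
    · obtain ⟨r, hr, hpr⟩ := hex
      have hrd : p + t + 1 ≤ r := by
        rcases hspec r hr (by omega) with h | h <;> omega
      have hrb := hSbound r hr
      refine ⟨p + t, by omega, by omega, ?_⟩
      intro q hq
      rcases eq_or_ne q p with rfl | hqp
      · omega
      · rcases hspec q hq hqp with h | h <;> omega
    · push_neg at hex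
      obtain ⟨q, hq, hqp⟩ := Finset.exists_mem_ne (by omega : 1 < S.card) p
      have hqlt : q < p := lt_of_le_of_ne (hex q hq) hqp
      have hqd : q + t + 1 ≤ p := by
        rcases hspec q hq hqp with h | h <;> omega
      refine ⟨p - 1, by omega, by omega, ?_⟩
      intro q' hq'
      rcases eq_or_ne q' p with rfl | hq'p
      · omega
      · have := hex q' hq'
        rcases hspec q' hq' hq'p with h | h <;> omega
  obtain ⟨w, hw1, hw2, hw3⟩ := hwex
  -- counting
  have hdisjS : ∀ a ∈ S, ∀ b ∈ S, a ≠ b →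
      Disjoint (Finset.Icc a (a + t - 1)) (Finset.Icc b (b + t - 1)) := by
    intro a ha b hb hab
    rw [Finset.disjoint_iff_inter_eq_empty, inter_empty_iff (by omega : 1 ≤ t)]
    exact hSdist a ha b hb hab
  have hcards : (S.biUnion fun a => Finset.Icc a (a + t - 1)).card = S.card * t := by
    rw [Finset.card_biUnion hdisjS]
    rw [Finset.sum_congr rfl (fun a ha => card_Icc_t (by omega : 1 ≤ t) (hSbound a ha).1)]
    simp [mul_comm]
  have hsub : (S.biUnion fun a => Finset.Icc a (a + t - 1)) ⊆ (Finset.Icc 1 n).erase w := by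
    intro x hx
    obtain ⟨a, ha, hxa⟩ := Finset.mem_biUnion.mp hx
    rw [Finset.mem_Icc] at hxa
    have hab := hSbound a ha
    rw [Finset.mem_erase, Finset.mem_Icc]
    refine ⟨?_, by omega, by omega⟩
    intro hxw
    exact hw3 a ha (by omega)
  have hwmem : w ∈ Finset.Icc 1 n := by rw [Finset.mem_Icc]; omega
  have hle := Finset.card_le_card hsub
  rw [hcards, Finset.card_erase_of_mem hwmem, Nat.card_Icc] at hle
  have hfin : M.card * t ≤ n - 1 := by
    rw [← hScard]; omega
  have : M.card ≤ (n-1)/t := Nat.le_div_iff_mul_le (by omega : 0 < t) |>.mpr hfin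
  exact le_trans this (le_max_right _ _)

lemma exists_restricted {n t : ℕ} (ht : 2 ≤ t) (htn : t ≤ n) :
    ∃ M : Finset (Finset ℕ), (pathComplex n t).IsRestrictedMatching M ∧
      M.card = max 1 ((n-1)/t) := by
  classical
  have hfac := facets_pathComplex (n := n) (by omega : 1 ≤ t) htn
  by_cases hk : (n-1)/t ≤ 1
  · -- singleton matching
    refine ⟨{Finset.Icc 1 (1 + t - 1)}, ⟨⟨?_, ?_⟩, ?_⟩, ?_⟩
    · intro F hF
      rw [Finset.mem_singleton] at hF
      subst hF
      rw [hfac, mem_pathFacets]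
      exact ⟨1, le_refl _, by omega, rfl⟩
    · intro F hF G hG hFG
      rw [Finset.mem_singleton] at hF hG
      exact absurd (hF.trans hG.symm) hFG
    · refine ⟨Finset.Icc 1 (1 + t - 1), Finset.mem_singleton_self _, ?_⟩
      intro G hG hne
      rw [Finset.mem_singleton] at hG
      exact absurd hG hne
    · rw [Finset.card_singleton]
      omega
  · push_neg at hk
    set k := (n-1)/t with hkdef
    have hkt : k * t ≤ n - 1 := Nat.div_mul_le_self _ _
    have hmax : max 1 k = k := by omega
    set c : ℕ := (k-1)*t + 2 with hc
    have hc1 : (k-1)*t + t = k*t := by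
      rw [← Nat.succ_mul]; congr 1; omega
    have hcN : c ≤ n - t + 1 := by omega
    set S : Finset ℕ := ((Finset.range (k-1)).image (fun i => 1 + i*t)) ∪ {c} with hS
    have hmemS : ∀ a, a ∈ S ↔ (∃ i < k-1, a = 1 + i*t) ∨ a = c := by
      intro a
      simp only [hS, Finset.mem_union, Finset.mem_image, Finset.mem_range,
        Finset.mem_singleton]
      constructor
      · rintro (⟨i, hi, rfl⟩ | h)
        · exact Or.inl ⟨i, hi, rfl⟩
        · exact Or.inr h
      · rintro (⟨i, hi, rfl⟩ | h)
        · exact Or.inl ⟨i, hi, rfl⟩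
        · exact Or.inr h
    have himax : ∀ i, i < k - 1 → 1 + i*t + t + 1 ≤ c := by
      intro i hi
      have h1 : (i+1)*t ≤ (k-1)*t := Nat.mul_le_mul_right t (by omega)
      rw [Nat.succ_mul] at h1
      omega
    have hSbound : ∀ a ∈ S, 1 ≤ a ∧ a ≤ n - t + 1 := by
      intro a ha
      rcases (hmemS a).mp ha with ⟨i, hi, rfl⟩ | rfl
      · have := himax i hi
        omega
      · omega
    have hSdist : ∀ a ∈ S, ∀ b ∈ S, a ≠ b → a + t ≤ b ∨ b + t ≤ a := by
      intro a ha b hb hab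
      rcases (hmemS a).mp ha with ⟨i, hi, rfl⟩ | rfl <;>
        rcases (hmemS b).mp hb with ⟨i', hi', rfl⟩ | rfl
      · have hii' : i ≠ i' := by
          intro h; exact hab (by rw [h])
        rcases lt_or_gt_of_ne hii' with h | h
        · left
          have h1 : (i+1)*t ≤ i'*t := Nat.mul_le_mul_right t (by omega)
          rw [Nat.succ_mul] at h1
          omega
        · right
          have h1 : (i'+1)*t ≤ i*t := Nat.mul_le_mul_right t (by omega)
          rw [Nat.succ_mul] at h1
          omega
      · left
        have := himax i hi
        omega
      · right
        have := himax i' hi'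
        omega
      · exact absurd rfl hab
    have hsc : ∀ i, i < k - 1 → 1 + i*t ≠ c := by
      intro i hi
      have := himax i hi
      omega
    have hScard : S.card = k := by
      rw [hS, Finset.card_union_of_disjoint, Finset.card_image_of_injOn,
        Finset.card_range, Finset.card_singleton]
      · omega
      · intro x hx y hy hxy
        rw [Finset.mem_coe, Finset.mem_range] at hx hy
        exact Nat.eq_of_mul_eq_mul_right (by omega : 0 < t) (Nat.add_left_cancel hxy)
      · rw [Finset.disjoint_singleton_right]
        intro hcmem
        obtain ⟨i, hi, hieq⟩ := Finset.mem_image.mp hcmem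
        rw [Finset.mem_range] at hi
        exact hsc i hi hieq
    set M : Finset (Finset ℕ) := S.image (fun a => Finset.Icc a (a + t - 1)) with hM
    have hMcard : M.card = k := by
      rw [hM, Finset.card_image_of_injOn, hScard]
      intro a ha b hb hab
      exact Icc_start_inj (by omega : 1 ≤ t) (hSbound a ha).1 (hSbound b hb).1 hab
    have hMfac : M ⊆ (pathComplex n t).facets := by
      intro F hF
      obtain ⟨a, ha, rfl⟩ := Finset.mem_image.mp hF
      rw [hfac, mem_pathFacets]
      exact ⟨a, (hSbound a ha).1, (hSbound a ha).2, rfl⟩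
    have hMdisj : ∀ F ∈ M, ∀ G ∈ M, F ≠ G → F ∩ G = ∅ := by
      intro F hF G hG hFG
      obtain ⟨a, ha, rfl⟩ := Finset.mem_image.mp hF
      obtain ⟨b, hb, rfl⟩ := Finset.mem_image.mp hG
      have hab : a ≠ b := by
        intro h; exact hFG (by rw [h])
      rw [inter_empty_iff (by omega : 1 ≤ t)]
      exact hSdist a ha b hb hab
    refine ⟨M, ⟨⟨hMfac, hMdisj⟩, Finset.Icc c (c + t - 1), ?_, ?_⟩, by omega⟩
    · rw [hM]
      exact Finset.mem_image_of_mem _ ((hmemS c).mpr (Or.inr rfl))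
    · intro G hG hne
      obtain ⟨a, ha, rfl⟩ := Finset.mem_image.mp hG
      rcases (hmemS a).mp ha with ⟨i, hi, rfl⟩ | rfl
      · apply formGap_symm
        exact formGap_of_dist (by omega : 1 ≤ t) (hSbound _ ha).1 (hSbound _ ha).2
          (by omega) hcN htn (himax i hi)
      · exact absurd rfl hne

theorem nu0_path {n t : ℕ} (ht : 2 ≤ t) (htn : t ≤ n) :
    (pathComplex n t).restrictedMatchingNumber = max 1 ((n-1)/t) := by
  obtain ⟨M0, hM0, hM0c⟩ := exists_restricted ht htn
  apply le_antisymm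
  · apply csSup_le
    · exact ⟨M0.card, M0, hM0, rfl⟩
    · rintro r ⟨M, hrm, rfl⟩
      exact restricted_card_le ht htn hrm
  · apply le_csSup
    · refine ⟨max 1 ((n-1)/t), ?_⟩
      rintro r ⟨M, hrm, rfl⟩
      exact restricted_card_le ht htn hrm
    · exact ⟨M0, hM0, hM0c⟩

end P6

section P7

lemma starts_to_d {n t k : ℕ} (ht : 1 ≤ t) (hk : 1 ≤ k) (hkt : k * t ≤ n)
    {S : Finset ℕ} (hcard : S.card = k)
    (hbound : ∀ a ∈ S, 1 ≤ a ∧ a ≤ n - t + 1)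
    (hdist : ∀ a ∈ S, ∀ b ∈ S, a ≠ b → a + t ≤ b ∨ b + t ≤ a) :
    ∃ d ∈ Dset k (n - k*t),
      S.biUnion (fun a => Finset.Icc a (a + t - 1)) = Ud k t d := by
  classical
  set σ := S.orderIsoOfFin hcard with hσ
  set a : Fin k → ℕ := fun i => (σ i : ℕ) with ha
  have hamem : ∀ i, a i ∈ S := fun i => (σ i).2
  have hasm : StrictMono a := fun i j hij => by
    have := σ.lt_iff_lt.mpr hij
    exact_mod_cast this
  have hstep1 : ∀ i j : Fin k, i < j → a i + t ≤ a j := by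
    intro i j hij
    have hne : a i ≠ a j := ne_of_lt (hasm hij)
    rcases hdist _ (hamem i) _ (hamem j) hne with h | h
    · exact h
    · have := hasm hij; omega
  have hstep : ∀ (m : ℕ) (i j : Fin k), (j : ℕ) = (i : ℕ) + m → a i + m * t ≤ a j := by
    intro m
    induction m with
    | zero =>
      intro i j h
      have : i = j := Fin.ext (by omega)
      rw [this]; omega
    | succ m ih =>
      intro i j h
      have hj' : (i : ℕ) + m < k := by have := j.2; omega
      set j' : Fin k := ⟨(i : ℕ) + m, hj'⟩ with hj'def
      have h1 : a i + m * t ≤ a j' := ih i j' rfl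
      have h2 : a j' + t ≤ a j := hstep1 j' j (by rw [Fin.lt_def]; simp [hj'def]; omega)
      rw [Nat.succ_mul]
      omega
  have hzero : (0 : ℕ) < k := hk
  have halb : ∀ i : Fin k, 1 + (i : ℕ) * t ≤ a i := by
    intro i
    have h1 := hstep (i : ℕ) ⟨0, hzero⟩ i (by simp)
    have h2 := (hbound _ (hamem ⟨0, hzero⟩)).1
    omega
  have haub : ∀ i : Fin k, a i + (k - 1 - (i:ℕ)) * t ≤ n - t + 1 := by
    intro i
    have hlast : (k - 1) < k := by omega
    have h1 := hstep (k - 1 - (i:ℕ)) i ⟨k-1, hlast⟩ (by simp; omega)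
    have h2 := (hbound _ (hamem ⟨k-1, hlast⟩)).2
    omega
  set d : Fin k → ℕ := fun i => a i - (1 + (i:ℕ) * t) with hd
  have had : ∀ i : Fin k, a i = 1 + (i:ℕ)*t + d i := by
    intro i
    have := halb i
    simp only [hd]
    omega
  refine ⟨d, ?_, ?_⟩
  · rw [mem_Dset]
    constructor
    · intro i
      have h1 := haub i
      have h2 := halb i
      have h3 : (k - 1 - (i:ℕ)) * t + (i:ℕ) * t = (k-1) * t := by
        rw [← Nat.add_mul]
        congr 1
        have := i.2
        omega
      have h4 : (k-1) * t + t = k * t := by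
        rw [← Nat.succ_mul]
        congr 1
        omega
      simp only [hd]
      omega
    · intro i j hij
      have h1 := hstep ((j:ℕ) - (i:ℕ)) i j (by have := Fin.le_def.mp hij; omega)
      have h2 : ((j:ℕ) - (i:ℕ)) * t + (i:ℕ) * t = (j:ℕ) * t := by
        rw [← Nat.add_mul]
        congr 1
        have := Fin.le_def.mp hij
        omega
      have h3 := halb i
      have h4 := halb j
      simp only [hd]
      omega
  · ext w
    rw [Finset.mem_biUnion, mem_Ud]
    constructor
    · rintro ⟨b, hb, hwb⟩
      set i : Fin k := σ.symm ⟨b, hb⟩ with hi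
      have hab : a i = b := by
        rw [ha, hi]
        simp
      rw [Finset.mem_Icc] at hwb
      refine ⟨i, ?_, ?_⟩
      · rw [← had i, hab]; omega
      · have := halb i
        have := had i
        omega
    · rintro ⟨i, h1, h2⟩
      refine ⟨a i, hamem i, ?_⟩
      rw [Finset.mem_Icc]
      have := had i
      have := halb i
      omega

lemma d_to_matching {n t k : ℕ} (ht : 1 ≤ t) (hk : 1 ≤ k) (hkt : k * t ≤ n)
    {d : Fin k → ℕ} (hd : d ∈ Dset k (n - k*t)) :
    ∃ M : Finset (Finset ℕ), M ⊆ pathFacets n t ∧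
      (∀ F ∈ M, ∀ G ∈ M, F ≠ G → F ∩ G = ∅) ∧ M.card = k ∧
      M = (Finset.univ : Finset (Fin k)).image
        (fun i : Fin k => Finset.Icc (1 + (i:ℕ)*t + d i) ((1 + (i:ℕ)*t + d i) + t - 1)) ∧
      M.biUnion id = Ud k t d := by
  classical
  obtain ⟨hdle, hdmono⟩ := mem_Dset.mp hd
  set a : Fin k → ℕ := fun i => 1 + (i:ℕ)*t + d i with ha
  have hbound : ∀ i : Fin k, 1 ≤ a i ∧ a i ≤ n - t + 1 := by
    intro i
    have h1 : ((i:ℕ)+1) * t ≤ k * t := Nat.mul_le_mul_right t (by have := i.2; omega)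
    rw [Nat.succ_mul] at h1
    have h2 := hdle i
    constructor
    · simp only [ha]; omega
    · simp only [ha]; omega
  have hstep : ∀ i j : Fin k, i < j → a i + t ≤ a j := by
    intro i j hij
    have h1 : ((i:ℕ)+1) * t ≤ (j:ℕ) * t := Nat.mul_le_mul_right t (by
      exact Fin.lt_def.mp hij)
    rw [Nat.succ_mul] at h1
    have h2 : d i ≤ d j := hdmono (le_of_lt hij)
    simp only [ha]; omega
  have hainj : ∀ i j : Fin k, a i = a j → i = j := by
    intro i j hij
    rcases lt_trichotomy i j with h | h | h
    · have := hstep i j h; omega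
    · exact h
    · have := hstep j i h; omega
  set M : Finset (Finset ℕ) := (Finset.univ : Finset (Fin k)).image
      (fun i => Finset.Icc (a i) (a i + t - 1)) with hM
  have hMsub : M ⊆ pathFacets n t := by
    intro F hF
    obtain ⟨i, _, rfl⟩ := Finset.mem_image.mp hF
    rw [mem_pathFacets]
    exact ⟨a i, (hbound i).1, (hbound i).2, rfl⟩
  have hMdisj : ∀ F ∈ M, ∀ G ∈ M, F ≠ G → F ∩ G = ∅ := by
    intro F hF G hG hFG
    obtain ⟨i, _, rfl⟩ := Finset.mem_image.mp hF
    obtain ⟨j, _, rfl⟩ := Finset.mem_image.mp hG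
    have hij : i ≠ j := fun h => hFG (by rw [h])
    rw [inter_empty_iff ht]
    rcases lt_or_gt_of_ne hij with h | h
    · exact Or.inl (hstep i j h)
    · exact Or.inr (hstep j i h)
  refine ⟨M, hMsub, hMdisj, ?_, rfl, ?_⟩
  · rw [hM, Finset.card_image_of_injOn, Finset.card_univ, Fintype.card_fin]
    intro i _ j _ hij
    apply hainj
    exact Icc_start_inj ht (hbound i).1 (hbound j).1 hij
  · ext w
    rw [Finset.mem_biUnion, mem_Ud]
    constructor
    · rintro ⟨F, hF, hwF⟩
      obtain ⟨i, _, rfl⟩ := Finset.mem_image.mp hF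
      rw [id_eq, Finset.mem_Icc] at hwF
      simp only [ha] at hwF
      exact ⟨i, by omega, by omega⟩
    · rintro ⟨i, h1, h2⟩
      refine ⟨Finset.Icc (a i) (a i + t - 1), Finset.mem_image_of_mem _ (Finset.mem_univ i), ?_⟩
      rw [id_eq, Finset.mem_Icc]
      constructor
      · simp only [ha]; omega
      · simp only [ha]; omega

lemma indic_inj {S T : Finset ℕ} (h : indic S = indic T) : S = T := by
  ext w
  have := DFunLike.congr_fun h w
  rw [indic_apply, indic_apply] at this
  by_cases hS : w ∈ S <;> by_cases hT : w ∈ T <;> simp [hS, hT] at this ⊢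

lemma genset_eq (K : Type) [Field K] {n t k : ℕ} (ht : 2 ≤ t) (htn : t ≤ n)
    (hk : 1 ≤ k) (hkt : k*t ≤ n) :
    {p : MvPolynomial ℕ K | ∃ M : Finset (Finset ℕ), M ⊆ (pathComplex n t).facets ∧
      (∀ F ∈ M, ∀ G ∈ M, F ≠ G → F ∩ G = ∅) ∧ M.card = k ∧
      p = ∏ F ∈ M, ∏ v ∈ F, (X v : MvPolynomial ℕ K)}
    = (fun e => monomial e (1:K)) '' ((fun d => indic (Ud k t d)) '' ↑(Dset k (n - k*t))) := by
  classical
  have hfac := facets_pathComplex (n := n) (by omega : 1 ≤ t) htn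
  have hprod : ∀ M : Finset (Finset ℕ), (∀ F ∈ M, ∀ G ∈ M, F ≠ G → F ∩ G = ∅) →
      (∏ F ∈ M, ∏ v ∈ F, (X v : MvPolynomial ℕ K)) = ∏ v ∈ M.biUnion id, X v := by
    intro M hdisj
    have hpd : Set.PairwiseDisjoint (↑M) (id : Finset ℕ → Finset ℕ) := by
      intro F hF G hG hFG
      rw [Finset.mem_coe] at hF hG
      rw [Function.onFun, id_eq, id_eq, Finset.disjoint_iff_inter_eq_empty]
      exact hdisj F hF G hG hFG
    rw [Finset.prod_biUnion hpd]
    simp only [id_eq]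
  ext p
  constructor
  · rintro ⟨M, hMfac, hdisj, hcard, rfl⟩
    rw [hfac] at hMfac
    obtain ⟨S, hScard, hSbound, hSdist, hSimg, _⟩ :=
      matching_starts (by omega : 1 ≤ t) hMfac hdisj
    obtain ⟨d, hdD, hdU⟩ := starts_to_d (by omega : 1 ≤ t) hk hkt
      (by omega : S.card = k) hSbound hSdist
    have hMb : M.biUnion id = Ud k t d := by
      rw [hSimg, ← hdU]
      ext w
      simp only [Finset.mem_biUnion, Finset.mem_image, id_eq]
      constructor
      · rintro ⟨F, ⟨b, hb, rfl⟩, hw⟩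
        exact ⟨b, hb, hw⟩
      · rintro ⟨b, hb, hw⟩
        exact ⟨_, ⟨b, hb, rfl⟩, hw⟩
    refine ⟨indic (Ud k t d), ⟨d, hdD, rfl⟩, ?_⟩
    show (monomial (indic (Ud k t d)) (1:K)) = _
    rw [monomial_indic_eq_prod, ← hMb, ← hprod M hdisj]
  · rintro ⟨e, ⟨d, hdD, rfl⟩, rfl⟩
    rw [Finset.mem_coe] at hdD
    obtain ⟨M, hMsub, hdisj, hcard, _, hMb⟩ :=
      d_to_matching (by omega : 1 ≤ t) hk hkt hdD
    refine ⟨M, by rw [hfac]; exact hMsub, hdisj, hcard, ?_⟩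
    show (monomial (indic (Ud k t d)) (1:K)) = _
    rw [hprod M hdisj, hMb, monomial_indic_eq_prod]

end P7


section P8

def relLQ {k : ℕ} (A B : Fin k → ℕ) : Prop := A = B ∨ dlt B A

lemma dlt_trans {k : ℕ} {a b c : Fin k → ℕ} (h1 : dlt a b) (h2 : dlt b c) : dlt a c := by
  obtain ⟨N₁, lt_N₁, a_lt_b⟩ := h1
  obtain ⟨N₂, lt_N₂, b_lt_c⟩ := h2
  rcases lt_trichotomy N₁ N₂ with H | H | H
  · exact ⟨N₁, fun j hj => (lt_N₁ _ hj).trans (lt_N₂ _ <| hj.trans H), lt_N₂ _ H ▸ a_lt_b⟩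
  · subst H
    exact ⟨N₁, fun j hj => (lt_N₁ _ hj).trans (lt_N₂ _ hj), a_lt_b.trans b_lt_c⟩
  · exact ⟨N₂, fun j hj => (lt_N₁ _ (hj.trans H)).trans (lt_N₂ _ hj), (lt_N₁ _ H).symm ▸ b_lt_c⟩

lemma dlt_irrefl {k : ℕ} (a : Fin k → ℕ) : ¬ dlt a a := by
  rintro ⟨i, _, hi⟩
  exact lt_irrefl _ hi

lemma dlt_asymm {k : ℕ} {a b : Fin k → ℕ} (h1 : dlt a b) (h2 : dlt b a) : False :=
  dlt_irrefl a (dlt_trans h1 h2)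

lemma dlt_tricho {k : ℕ} (a b : Fin k → ℕ) : dlt a b ∨ a = b ∨ dlt b a :=
  by
    have h : ¬ dlt a b → ¬ dlt b a → a = b :=
      (Pi.isTrichotomous_lex _ _ (IsWellFounded.wf)).trichotomous a b
    by_cases h1 : dlt a b
    · exact Or.inl h1
    by_cases h2 : dlt b a
    · exact Or.inr (Or.inr h2)
    exact Or.inr (Or.inl (h h1 h2))

instance relLQ_trans {k : ℕ} : IsTrans (Fin k → ℕ) relLQ := by
  constructor
  rintro a b c (rfl | h1) (rfl | h2)
  · exact Or.inl rfl
  · exact Or.inr h2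
  · exact Or.inr h1
  · exact Or.inr (dlt_trans h2 h1)

instance relLQ_antisymm {k : ℕ} : IsAntisymm (Fin k → ℕ) relLQ := by
  constructor
  rintro a b (rfl | h1) (h2 | h2)
  · rfl
  · rfl
  · exact h2.symm
  · exact absurd h2 (fun h => dlt_asymm h1 h)

instance relLQ_total {k : ℕ} : IsTotal (Fin k → ℕ) relLQ := by
  constructor
  intro a b
  rcases dlt_tricho a b with h | h | h
  · exact Or.inr (Or.inr h)
  · exact Or.inl (Or.inl h)
  · exact Or.inl (Or.inr h)

lemma degOf_indic' (S : Finset ℕ) : degOf (indic S) = S.card := degOf_indic S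


end P8


end Aux

/-- For the `t`-path simplicial tree `Γ_{n,t}` of the path
graph `P_n`, the squarefree power `I_{n,t}^{[ν₀(Γ_{n,t})]}` has linear
quotients. -/
theorem path_restricted_sqfreePower_hasLinearQuotients
    (K : Type) [Field K] (n t : ℕ) (ht : 2 ≤ t) (htn : t ≤ n) :
    HasLinearQuotients
      (sqfreePower K (pathComplex n t) (pathComplex n t).restrictedMatchingNumber) := by
  classical
  rw [nu0_path ht htn]
  set k := max 1 ((n-1)/t) with hkdef
  have hk : 1 ≤ k := le_max_left 1 _
  have hkt : k * t ≤ n := kmax_mul_le n t (by omega) htn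
  have hktn : n ≤ k * t + t := kmax_mul_ge n t (by omega) htn
  set s := n - k * t with hsdef
  have hst : s ≤ t := by omega
  have hideal : sqfreePower K (pathComplex n t) k = Ideal.span
      ((fun e => monomial e (1:K)) '' ((fun d => indic (Ud k t d)) '' ↑(Dset k s))) := by
    rw [← genset_eq K ht htn hk hkt]
    rfl
  rw [hideal]
  letI : DecidableRel (relLQ (k := k)) := Classical.decRel _
  set ℓd : List (Fin k → ℕ) := (Dset k s).sort relLQ with hℓd
  have hsorted : List.Pairwise relLQ ℓd := Finset.pairwise_sort _ _
  have hndd : ℓd.Nodup := Finset.sort_nodup _ _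
  have hmemd : ∀ d, d ∈ ℓd ↔ d ∈ Dset k s := fun d => Finset.mem_sort _
  set ℓE : List (ℕ →₀ ℕ) := ℓd.map (fun d => indic (Ud k t d)) with hℓE
  have hset : ((fun d => indic (Ud k t d)) '' ↑(Dset k s)) = {e : ℕ →₀ ℕ | e ∈ ℓE} := by
    ext e
    simp only [Set.mem_image, Finset.mem_coe, Set.mem_setOf_eq, hℓE, List.mem_map]
    constructor
    · rintro ⟨d, hd, rfl⟩; exact ⟨d, (hmemd d).mpr hd, rfl⟩
    · rintro ⟨d, hd, rfl⟩; exact ⟨d, (hmemd d).mp hd, rfl⟩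
  rw [hset]
  have hlen : ℓE.length = ℓd.length := List.length_map _
  have hgetmap : ∀ (m : ℕ) (hm : m < ℓd.length),
      (ℓE[m]'(by omega)) = indic (Ud k t (ℓd[m]'hm)) := by
    intro m hm
    simp [hℓE]
  apply generic_linear_quotients ℓE ?_ (k*t) ?_ ?_
  · -- Nodup
    apply List.Nodup.map_on ?_ hndd
    intro x hx y hy hxy
    exact Ud_injective (by omega : 1 ≤ t) ((hmemd x).mp hx) ((hmemd y).mp hy)
      (indic_inj hxy)
  · -- degrees
    intro e he
    obtain ⟨d, hd, rfl⟩ := List.mem_map.mp he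
    rw [degOf_indic', Ud_card (by omega : 1 ≤ t) ((hmemd d).mp hd)]
  · -- exchange
    intro i hi j hj
    have hi' : i < ℓd.length := by omega
    have hj' : j < ℓd.length := by omega
    have hAD : (ℓd[j]'hj') ∈ Dset k s := (hmemd _).mp (List.getElem_mem _)
    have hBD : (ℓd[i]'hi') ∈ Dset k s := (hmemd _).mp (List.getElem_mem _)
    have hdltBA : dlt (ℓd[i]'hi') (ℓd[j]'hj') := by
      have hrel := List.pairwise_iff_getElem.mp hsorted j i hj' hi' hj
      rcases hrel with heq | hd
      · exfalso
        have : j = i := by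
          apply List.Nodup.getElem_inj_iff hndd |>.mp heq
        omega
      · exact hd
    obtain ⟨v, hvA, hvB, C, hCD, hBC, hsub⟩ :=
      exchange (by omega : 1 ≤ t) hst hAD hBD hdltBA
    refine ⟨v, ?_, ?_, ?_⟩
    · rw [hgetmap j hj', indic_apply, if_pos hvA]
      exact one_ne_zero
    · rw [hgetmap i hi', indic_apply, if_neg hvB]
    · obtain ⟨l, hl, hCl⟩ := List.mem_iff_getElem.mp ((hmemd C).mpr hCD)
      have hli : l < i := by
        by_contra hcon
        push_neg at hcon
        rcases eq_or_lt_of_le hcon with heq | hlt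
        · subst heq
          rw [← hCl] at hBC
          exact dlt_irrefl _ hBC
        · have hrel := List.pairwise_iff_getElem.mp hsorted i l hi' hl hlt
          rcases hrel with heq | hd
          · rw [heq, hCl] at hBC
            exact dlt_irrefl _ hBC
          · rw [hCl] at hd
            exact dlt_asymm hBC hd
      refine ⟨l, hli, ?_⟩
      rw [hgetmap l hl, hgetmap i hi', hCl]
      rw [Finsupp.le_def]
      intro w
      rw [Finsupp.add_apply, indic_apply, indic_apply, Finsupp.single_apply]
      by_cases hw : w ∈ Ud k t C
      · rw [if_pos hw]
        rcases Finset.mem_insert.mp (hsub hw) with h | h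
        · rw [if_pos h.symm]
          omega
        · rw [if_pos h]
          omega
      · rw [if_neg hw]
        omega

end
end

section
/- Let Δ be a pure simplicial forest whose facets have cardinality at least 2, and let 1 ≤ k < ν₀(Δ). Then I(Δ)^{[k]} is not linearly related: there exist minimal monomial generators u and v of I(Δ)^{[k]} that are not connected by a path in G^{(u,v)}_{I(Δ)^{[k]}}. -/
noncomputable section

open Finset MvPolynomial

namespace SqfAux


variable {V : Type} [DecidableEq V]

def indF (A : Finset V) : V →₀ ℕ := ∑ v ∈ A, Finsupp.single v 1

lemma indF_apply (A : Finset V) (x : V) : indF A x = if x ∈ A then 1 else 0 := by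
  classical
  rw [indF, Finsupp.finset_sum_apply]
  rw [show (∑ v ∈ A, Finsupp.single v 1 x) = ∑ v ∈ A, if v = x then 1 else 0 from
    Finset.sum_congr rfl fun v _ => Finsupp.single_apply]
  exact Finset.sum_ite_eq' A x fun _ => 1

lemma indF_le_iff {A B : Finset V} : indF A ≤ indF B ↔ A ⊆ B := by
  constructor
  · intro h x hx
    have := h x
    rw [indF_apply, indF_apply, if_pos hx] at this
    by_contra hxB
    rw [if_neg hxB] at this; omega
  · intro h x
    rw [indF_apply, indF_apply]
    by_cases hx : x ∈ A
    · rw [if_pos hx, if_pos (h hx)]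
    · simp [hx]

lemma indF_inj {A B : Finset V} (h : indF A = indF B) : A = B :=
  Finset.Subset.antisymm (indF_le_iff.mp h.le) (indF_le_iff.mp h.ge)

lemma indF_insert (a : V) (A : Finset V) (h : a ∉ A) :
    indF (insert a A) = Finsupp.single a 1 + indF A := by
  rw [indF, Finset.sum_insert h, ← indF]

lemma indF_sup (A B : Finset V) : indF A ⊔ indF B = indF (A ∪ B) := by
  ext x
  simp only [Finsupp.sup_apply, indF_apply, Finset.mem_union]
  by_cases hA : x ∈ A <;> by_cases hB : x ∈ B <;> simp [hA, hB]

lemma degOf_add (a b : V →₀ ℕ) : degOf (a + b) = degOf a + degOf b :=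
  Finsupp.sum_add_index' (fun _ => rfl) fun _ _ _ => rfl

lemma degOf_single (v : V) (n : ℕ) : degOf (Finsupp.single v n) = n :=
  Finsupp.sum_single_index rfl

lemma degOf_indF (A : Finset V) : degOf (indF A) = A.card := by
  classical
  induction A using Finset.induction with
  | empty => simp [indF, degOf]
  | insert a A h ih =>
    rw [indF_insert _ _ h, degOf_add, degOf_single, ih, Finset.card_insert_of_notMem h]
    omega

lemma degOf_eq_zero {d : V →₀ ℕ} (h : degOf d = 0) : d = 0 := by
  ext x
  simp only [Finsupp.coe_zero, Pi.zero_apply]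
  by_contra hx
  have hxs : x ∈ d.support := Finsupp.mem_support_iff.mpr hx
  have hrfl : degOf d = ∑ y ∈ d.support, d y := rfl
  have : d x ≤ ∑ y ∈ d.support, d y :=
    Finset.single_le_sum (f := fun y => d y) (fun _ _ => Nat.zero_le _) hxs
  rw [← hrfl] at this
  omega

lemma degOf_mono {c d : V →₀ ℕ} (h : c ≤ d) : degOf c ≤ degOf d := by
  obtain ⟨e, rfl⟩ := exists_add_of_le h
  rw [degOf_add]; omega

lemma eq_of_le_of_degOf_le {c d : V →₀ ℕ} (h : c ≤ d) (hd : degOf d ≤ degOf c) : c = d := by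
  obtain ⟨e, rfl⟩ := exists_add_of_le h
  rw [degOf_add] at hd
  rw [degOf_eq_zero (show degOf e = 0 by omega), add_zero]

lemma prod_X_eq (K : Type) [Field K] (A : Finset V) :
    (∏ v ∈ A, (X v : MvPolynomial V K)) = monomial (indF A) 1 := by
  classical
  induction A using Finset.induction with
  | empty => simp [indF]
  | insert a A h ih =>
    rw [Finset.prod_insert h, ih, indF_insert _ _ h, X, monomial_mul, one_mul]

lemma prod_monomial (K : Type) [Field K] (M : Finset (Finset V)) :
    (∏ F ∈ M, (monomial (indF F) 1 : MvPolynomial V K)) = monomial (∑ F ∈ M, indF F) 1 := by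
  classical
  induction M using Finset.induction with
  | empty => simp
  | insert a M h ih =>
    rw [Finset.prod_insert h, ih, Finset.sum_insert h, monomial_mul, one_mul]

lemma sum_indF_eq {M : Finset (Finset V)}
    (hd : ∀ F ∈ M, ∀ G ∈ M, F ≠ G → F ∩ G = ∅) :
    ∑ F ∈ M, indF F = indF (M.biUnion id) := by
  classical
  rw [indF, Finset.sum_biUnion]
  · rfl
  · intro x hx y hy hxy
    exact Finset.disjoint_left.mpr fun a ha ha' => by
      have : a ∈ x ∩ y := Finset.mem_inter.mpr ⟨ha, ha'⟩
      rw [hd x hx y hy hxy] at this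
      exact absurd this (Finset.notMem_empty a)


variable (K : Type) [Field K]

lemma prod_prod_eq {M : Finset (Finset V)}
    (h2 : ∀ F ∈ M, ∀ G ∈ M, F ≠ G → F ∩ G = ∅) :
    (∏ F ∈ M, ∏ v ∈ F, (X v : MvPolynomial V K)) = monomial (indF (M.biUnion id)) 1 := by
  rw [Finset.prod_congr rfl fun F _ => prod_X_eq K F, prod_monomial, sum_indF_eq h2]

def DSet (ℱ : Finset (Finset V)) (k : ℕ) : Set (V →₀ ℕ) :=
  {d | ∃ M : Finset (Finset V), M ⊆ ℱ ∧ (∀ F ∈ M, ∀ G ∈ M, F ≠ G → F ∩ G = ∅) ∧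
    M.card = k ∧ d = indF (M.biUnion id)}

lemma matchPow_eq (ℱ : Finset (Finset V)) (k : ℕ) :
    matchPow K ℱ k = Ideal.span ((fun s => monomial s (1 : K)) '' DSet ℱ k) := by
  unfold matchPow
  congr 1
  ext p
  constructor
  · rintro ⟨M, h1, h2, h3, rfl⟩
    exact ⟨indF (M.biUnion id), ⟨M, h1, h2, h3, rfl⟩, (prod_prod_eq K h2).symm⟩
  · rintro ⟨d, ⟨M, h1, h2, h3, rfl⟩, rfl⟩
    exact ⟨M, h1, h2, h3, (prod_prod_eq K h2).symm⟩

lemma mem_matchPow_iff {ℱ : Finset (Finset V)} {k : ℕ} {c : V →₀ ℕ} :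
    (monomial c (1 : K)) ∈ matchPow K ℱ k ↔ ∃ d ∈ DSet ℱ k, d ≤ c := by
  rw [matchPow_eq, mem_ideal_span_monomial_image]
  simp [MvPolynomial.support_monomial, (one_ne_zero : (1 : K) ≠ 0)]

lemma gen_mem {ℱ : Finset (Finset V)} {k : ℕ} {M : Finset (Finset V)} (h1 : M ⊆ ℱ)
    (h2 : ∀ F ∈ M, ∀ G ∈ M, F ≠ G → F ∩ G = ∅) (h3 : M.card = k) :
    (monomial (indF (M.biUnion id)) (1 : K)) ∈ matchPow K ℱ k := by
  rw [← prod_prod_eq K h2]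
  exact Ideal.subset_span ⟨M, h1, h2, h3, rfl⟩

lemma card_biUnion_eq {M : Finset (Finset V)} {t k : ℕ}
    (h2 : ∀ F ∈ M, ∀ G ∈ M, F ≠ G → F ∩ G = ∅) (h3 : M.card = k)
    (hc : ∀ F ∈ M, F.card = t) : (M.biUnion id).card = k * t := by
  rw [Finset.card_biUnion (fun x hx y hy hxy => Finset.disjoint_left.mpr fun a ha ha' => by
    have hmem : a ∈ x ∩ y := Finset.mem_inter.mpr ⟨ha, ha'⟩
    rw [h2 x hx y hy hxy] at hmem
    exact absurd hmem (Finset.notMem_empty a))]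
  rw [Finset.sum_congr rfl fun F hF => show (id F).card = t from hc F hF,
    Finset.sum_const, h3, smul_eq_mul]

lemma isMinGen_matching {ℱ : Finset (Finset V)} {t k : ℕ} (ht : ∀ F ∈ ℱ, F.card = t)
    {M : Finset (Finset V)} (h1 : M ⊆ ℱ)
    (h2 : ∀ F ∈ M, ∀ G ∈ M, F ≠ G → F ∩ G = ∅) (h3 : M.card = k) :
    IsMinGen (matchPow K ℱ k) (monomial (indF (M.biUnion id)) (1 : K)) := by
  refine ⟨⟨_, rfl⟩, gen_mem K h1 h2 h3, ?_⟩
  rintro v ⟨d, rfl⟩ hv hdvd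
  obtain ⟨s, ⟨N, hN1, hN2, hN3, rfl⟩, hsle⟩ := (mem_matchPow_iff K).mp hv
  have hdle : d ≤ indF (M.biUnion id) := by
    rcases (monomial_dvd_monomial.mp hdvd).1 with h | h
    · exact absurd h one_ne_zero
    · exact h
  have e1 : degOf (indF (N.biUnion id)) = k * t := by
    rw [degOf_indF, card_biUnion_eq hN2 hN3 fun F hF => ht F (hN1 hF)]
  have e2 : degOf (indF (M.biUnion id)) = k * t := by
    rw [degOf_indF, card_biUnion_eq h2 h3 fun F hF => ht F (h1 hF)]
  have hdeq : d = indF (M.biUnion id) := by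
    refine eq_of_le_of_degOf_le hdle ?_
    have := degOf_mono hsle
    omega
  rw [hdeq]

lemma matching_of_isMinGen {ℱ : Finset (Finset V)} {k : ℕ} {c : V →₀ ℕ}
    (h : IsMinGen (matchPow K ℱ k) (monomial c (1 : K))) :
    ∃ M : Finset (Finset V), M ⊆ ℱ ∧ (∀ F ∈ M, ∀ G ∈ M, F ≠ G → F ∩ G = ∅) ∧
      M.card = k ∧ c = indF (M.biUnion id) := by
  obtain ⟨-, hmem, hmin⟩ := h
  obtain ⟨s, ⟨N, hN1, hN2, hN3, rfl⟩, hsle⟩ := (mem_matchPow_iff K).mp hmem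
  have heq := hmin (monomial (indF (N.biUnion id)) 1) ⟨_, rfl⟩ (gen_mem K hN1 hN2 hN3)
    (monomial_dvd_monomial.mpr ⟨Or.inr hsle, dvd_refl 1⟩)
  rcases (MvPolynomial.monomial_eq_monomial_iff _ _ _ _).mp heq with h' | h'
  · exact ⟨N, hN1, hN2, hN3, h'.1.symm⟩
  · exact absurd h'.1 one_ne_zero


lemma facet_faces {Δ : SimplicialComplex V} {F : Finset V} (h : F ∈ Δ.facets) : F ∈ Δ.faces :=
  (Finset.mem_filter.mp h).1

lemma facet_eq_of_subset {Δ : SimplicialComplex V} {H F : Finset V}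
    (hH : H ∈ Δ.facets) (hF : F ∈ Δ.faces) (hsub : H ⊆ F) : H = F :=
  (Finset.mem_filter.mp hH).2 F hF hsub

lemma lemA {Δ : SimplicialComplex V} (hforest : Δ.IsForest) {t : ℕ}
    (hpure : ∀ F ∈ Δ.facets, F.card = t) {F₀ : Finset V} (hF₀ : F₀ ∈ Δ.facets) :
    ∀ n (𝒢 ℋ : Finset (Finset V)), 𝒢.card + ℋ.card ≤ n →
      𝒢 ⊆ Δ.facets →
      (∀ G ∈ 𝒢, ∀ G' ∈ 𝒢, G ≠ G' → G ∩ G' = ∅) →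
      (∀ G ∈ 𝒢, Δ.FormGap F₀ G) →
      ℋ ⊆ Δ.facets →
      (∀ H ∈ ℋ, ∀ H' ∈ ℋ, H ≠ H' → H ∩ H' = ∅) →
      F₀ ∉ ℋ →
      (∀ H ∈ ℋ, H ⊆ F₀ ∪ 𝒢.biUnion id) →
      (∃ H ∈ ℋ, (H ∩ F₀).Nonempty) →
      𝒢.card ≤ ℋ.card → False := by
  intro n
  induction n with
  | zero =>
    intro 𝒢 ℋ hn _ _ _ _ _ _ _ htouch _
    obtain ⟨H, hH, -⟩ := htouch
    have := Finset.card_pos.mpr ⟨H, hH⟩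
    omega
  | succ n ih =>
    intro 𝒢 ℋ hn h𝒢f h𝒢d hgap hℋf hℋd hF₀ℋ hsub htouch hcard
    have hF₀G : ∀ G ∈ 𝒢, F₀ ∩ G = ∅ := fun G hG => (hgap G hG).2.2.1
    -- Step 1 : some H equals some G : remove it from both families
    by_cases hHG : ∃ H, H ∈ ℋ ∧ H ∈ 𝒢
    · obtain ⟨H0, hH0ℋ, hH0𝒢⟩ := hHG
      refine ih (𝒢.erase H0) (ℋ.erase H0) ?_
        (fun G hG => h𝒢f (Finset.mem_of_mem_erase hG))
        (fun G hG G' hG' => h𝒢d G (Finset.mem_of_mem_erase hG) G' (Finset.mem_of_mem_erase hG'))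
        (fun G hG => hgap G (Finset.mem_of_mem_erase hG))
        (fun H hH => hℋf (Finset.mem_of_mem_erase hH))
        (fun H hH H' hH' => hℋd H (Finset.mem_of_mem_erase hH) H' (Finset.mem_of_mem_erase hH'))
        (fun h => hF₀ℋ (Finset.mem_of_mem_erase h)) ?_ ?_ ?_
      · have h1 := Finset.card_erase_of_mem hH0𝒢
        have h2 := Finset.card_erase_of_mem hH0ℋ
        have h3 := Finset.card_pos.mpr ⟨H0, hH0𝒢⟩
        have h4 := Finset.card_pos.mpr ⟨H0, hH0ℋ⟩
        omega
      · intro H hH x hx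
        obtain ⟨hHne, hHmem⟩ := Finset.mem_erase.mp hH
        rcases Finset.mem_union.mp (hsub H hHmem hx) with h | h
        · exact Finset.mem_union_left _ h
        · obtain ⟨G, hG, hxG⟩ := Finset.mem_biUnion.mp h
          by_cases hGH0 : G = H0
          · exfalso
            have hmem : x ∈ H ∩ H0 := Finset.mem_inter.mpr ⟨hx, hGH0 ▸ hxG⟩
            rw [hℋd H hHmem H0 hH0ℋ hHne] at hmem
            exact absurd hmem (Finset.notMem_empty x)
          · exact Finset.mem_union_right _
              (Finset.mem_biUnion.mpr ⟨G, Finset.mem_erase.mpr ⟨hGH0, hG⟩, hxG⟩)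
      · obtain ⟨Hs, hHs, hHsne⟩ := htouch
        refine ⟨Hs, Finset.mem_erase.mpr ⟨?_, hHs⟩, hHsne⟩
        rintro rfl
        obtain ⟨x, hx⟩ := hHsne
        have hx' := Finset.mem_inter.mp hx
        have hmem : x ∈ F₀ ∩ Hs := Finset.mem_inter.mpr ⟨hx'.2, hx'.1⟩
        rw [hF₀G Hs hH0𝒢] at hmem
        exact absurd hmem (Finset.notMem_empty x)
      · have h1 := Finset.card_erase_of_mem hH0𝒢
        have h2 := Finset.card_erase_of_mem hH0ℋ
        omega
    push_neg at hHG
    -- every member of ℋ is a facet contained in F₀ only if it equals F₀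
    have hfacet_eq : ∀ H ∈ ℋ, H ⊆ F₀ → False := by
      intro H hH hHF₀
      have : H = F₀ := facet_eq_of_subset (hℋf hH) (facet_faces hF₀) hHF₀
      exact hF₀ℋ (this ▸ hH)
    -- every member of ℋ meets at least two distinct members of 𝒢
    have htwo : ∀ H ∈ ℋ, ∃ G₁ ∈ 𝒢, ∃ G₂ ∈ 𝒢, G₁ ≠ G₂ ∧
        (H ∩ G₁).Nonempty ∧ (H ∩ G₂).Nonempty := by
      intro H hH
      have h1 : ∃ G₁ ∈ 𝒢, (H ∩ G₁).Nonempty := by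
        by_contra hno
        push_neg at hno
        refine hfacet_eq H hH fun x hx => ?_
        rcases Finset.mem_union.mp (hsub H hH hx) with h | h
        · exact h
        · obtain ⟨G, hG, hxG⟩ := Finset.mem_biUnion.mp h
          exact absurd (hno G hG) (Finset.nonempty_iff_ne_empty.mp ⟨x, Finset.mem_inter.mpr ⟨hx, hxG⟩⟩)
      obtain ⟨G₁, hG₁, hHG₁⟩ := h1
      by_cases h2 : ∃ G₂ ∈ 𝒢, G₂ ≠ G₁ ∧ (H ∩ G₂).Nonempty
      · obtain ⟨G₂, hG₂, hne, hHG₂⟩ := h2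
        exact ⟨G₁, hG₁, G₂, hG₂, fun h => hne h.symm, hHG₁, hHG₂⟩
      · exfalso
        push_neg at h2
        have hHsub : H ⊆ F₀ ∪ G₁ := by
          intro x hx
          rcases Finset.mem_union.mp (hsub H hH hx) with h | h
          · exact Finset.mem_union_left _ h
          · obtain ⟨G, hG, hxG⟩ := Finset.mem_biUnion.mp h
            rcases eq_or_ne G G₁ with rfl | hne
            · exact Finset.mem_union_right _ hxG
            · exact absurd (h2 G hG hne) (Finset.nonempty_iff_ne_empty.mp ⟨x, Finset.mem_inter.mpr ⟨hx, hxG⟩⟩)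
        rcases (hgap G₁ hG₁).2.2.2 H (hℋf hH) hHsub with h | h
        · exact hF₀ℋ (h ▸ hH)
        · exact hHG H hH (h ▸ hG₁)
    -- Step 3 : some G untouched
    by_cases hunt : ∃ G ∈ 𝒢, ∀ H ∈ ℋ, H ∩ G = ∅
    · obtain ⟨G0, hG0, hG0unt⟩ := hunt
      refine ih (𝒢.erase G0) ℋ ?_
        (fun G hG => h𝒢f (Finset.mem_of_mem_erase hG))
        (fun G hG G' hG' => h𝒢d G (Finset.mem_of_mem_erase hG) G' (Finset.mem_of_mem_erase hG'))
        (fun G hG => hgap G (Finset.mem_of_mem_erase hG)) hℋf hℋd hF₀ℋ ?_ htouch ?_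
      · have h1 := Finset.card_erase_of_mem hG0
        have h3 := Finset.card_pos.mpr ⟨G0, hG0⟩
        omega
      · intro H hH x hx
        rcases Finset.mem_union.mp (hsub H hH hx) with h | h
        · exact Finset.mem_union_left _ h
        · obtain ⟨G, hG, hxG⟩ := Finset.mem_biUnion.mp h
          by_cases hGG0 : G = G0
          · exfalso
            have hmem : x ∈ H ∩ G0 := Finset.mem_inter.mpr ⟨hx, hGG0 ▸ hxG⟩
            rw [hG0unt H hH] at hmem
            exact absurd hmem (Finset.notMem_empty x)
          · exact Finset.mem_union_right _
              (Finset.mem_biUnion.mpr ⟨G, Finset.mem_erase.mpr ⟨hGG0, hG⟩, hxG⟩)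
      · have h1 := Finset.card_erase_of_mem hG0
        omega
    push_neg at hunt
    have htouched : ∀ G ∈ 𝒢, ∃ H ∈ ℋ, (H ∩ G).Nonempty := by
      intro G hG
      obtain ⟨H, hH, hne⟩ := hunt G hG
      exact ⟨H, hH, hne⟩
    obtain ⟨Hs, hHs, hHsF₀⟩ := htouch
    -- the forest gives a leaf of 𝒢 ∪ ℋ
    have hSsub : 𝒢 ∪ ℋ ⊆ Δ.facets := Finset.union_subset h𝒢f hℋf
    obtain ⟨L, hLS, hleaf⟩ := hforest (𝒢 ∪ ℋ) hSsub ⟨Hs, Finset.mem_union_right _ hHs⟩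
    obtain ⟨G₁s, hG₁s, G₂s, hG₂s, hG12s, -, -⟩ := htwo Hs hHs
    rcases hleaf with hsingle | ⟨J, hJS, hJL, hjoint⟩
    · have e1 : G₁s = L := Finset.mem_singleton.mp (hsingle ▸ Finset.mem_union_left _ hG₁s)
      have e2 : G₂s = L := Finset.mem_singleton.mp (hsingle ▸ Finset.mem_union_left _ hG₂s)
      exact hG12s (e1.trans e2.symm)
    rcases Finset.mem_union.mp hLS with hL𝒢 | hLℋ
    · -- L ∈ 𝒢
      obtain ⟨Ha, hHa, hHaL⟩ := htouched L hL𝒢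
      have hHanL : Ha ≠ L := fun h => hHG Ha hHa (h ▸ hL𝒢)
      have hk := hjoint Ha (Finset.mem_union_right _ hHa) hHanL
      have hJHa : J = Ha := by
        rcases Finset.mem_union.mp hJS with hJ𝒢 | hJℋ
        · exfalso
          obtain ⟨x, hx⟩ := hHaL
          have hx' := hk hx
          have hmem : x ∈ J ∩ L := hx'
          rw [h𝒢d J hJ𝒢 L hL𝒢 hJL] at hmem
          exact absurd hmem (Finset.notMem_empty x)
        · by_contra hne
          obtain ⟨x, hx⟩ := hHaL
          have hx' := hk hx
          have hmem : x ∈ J ∩ Ha := Finset.mem_inter.mpr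
            ⟨(Finset.mem_inter.mp hx').1, (Finset.mem_inter.mp hx).1⟩
          rw [hℋd J hJℋ Ha hHa hne] at hmem
          exact absurd hmem (Finset.notMem_empty x)
      have huniq : ∀ H ∈ ℋ, H ≠ Ha → H ∩ L = ∅ := by
        intro H hH hne
        rw [Finset.eq_empty_iff_forall_notMem]
        intro x hx
        have hHnL : H ≠ L := fun h => hHG H hH (h ▸ hL𝒢)
        have hx' := hjoint H (Finset.mem_union_right _ hH) hHnL hx
        have hmem : x ∈ H ∩ Ha := Finset.mem_inter.mpr
          ⟨(Finset.mem_inter.mp hx).1, hJHa ▸ (Finset.mem_inter.mp hx').1⟩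
        rw [hℋd H hH Ha hHa hne] at hmem
        exact absurd hmem (Finset.notMem_empty x)
      by_cases hH' : ∃ H ∈ ℋ, (H ∩ F₀).Nonempty ∧ H ≠ Ha
      · obtain ⟨H', hH'ℋ, hH'F₀, hH'Ha⟩ := hH'
        refine ih (𝒢.erase L) (ℋ.erase Ha) ?_
          (fun G hG => h𝒢f (Finset.mem_of_mem_erase hG))
          (fun G hG G' hG' => h𝒢d G (Finset.mem_of_mem_erase hG) G' (Finset.mem_of_mem_erase hG'))
          (fun G hG => hgap G (Finset.mem_of_mem_erase hG))
          (fun H hH => hℋf (Finset.mem_of_mem_erase hH))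
          (fun H hH H' hH' => hℋd H (Finset.mem_of_mem_erase hH) H' (Finset.mem_of_mem_erase hH'))
          (fun h => hF₀ℋ (Finset.mem_of_mem_erase h)) ?_
          ⟨H', Finset.mem_erase.mpr ⟨hH'Ha, hH'ℋ⟩, hH'F₀⟩ ?_
        · have h1 := Finset.card_erase_of_mem hL𝒢
          have h2 := Finset.card_erase_of_mem hHa
          have h3 := Finset.card_pos.mpr ⟨L, hL𝒢⟩
          have h4 := Finset.card_pos.mpr ⟨Ha, hHa⟩
          omega
        · intro H hH x hx
          obtain ⟨hHne, hHmem⟩ := Finset.mem_erase.mp hH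
          rcases Finset.mem_union.mp (hsub H hHmem hx) with h | h
          · exact Finset.mem_union_left _ h
          · obtain ⟨G, hG, hxG⟩ := Finset.mem_biUnion.mp h
            by_cases hGL : G = L
            · exfalso
              have hmem : x ∈ H ∩ L := Finset.mem_inter.mpr ⟨hx, hGL ▸ hxG⟩
              rw [huniq H hHmem hHne] at hmem
              exact absurd hmem (Finset.notMem_empty x)
            · exact Finset.mem_union_right _
                (Finset.mem_biUnion.mpr ⟨G, Finset.mem_erase.mpr ⟨hGL, hG⟩, hxG⟩)
        · have h1 := Finset.card_erase_of_mem hL𝒢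
          have h2 := Finset.card_erase_of_mem hHa
          omega
      · -- the unique toucher of L is also the unique facet of ℋ meeting F₀ : counting
        push_neg at hH'
        have hHaF₀ : (Ha ∩ F₀).Nonempty := by
          have h := hH' Hs hHs hHsF₀
          exact h ▸ hHsF₀
        have htpos : 0 < t := by
          obtain ⟨x, hx⟩ := hHaF₀
          have hxF : x ∈ F₀ := (Finset.mem_inter.mp hx).2
          have := Finset.card_pos.mpr ⟨x, hxF⟩
          rwa [hpure F₀ hF₀] at this
        have hHaneF₀ : Ha ≠ F₀ := fun h => hF₀ℋ (h ▸ hHa)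
        have hF₀nsubHa : ¬ F₀ ⊆ Ha := fun hsub' =>
          hHaneF₀ (facet_eq_of_subset hF₀ (facet_faces (hℋf hHa)) hsub').symm
        obtain ⟨x₀, hx₀F₀, hx₀Ha⟩ := Finset.not_subset.mp hF₀nsubHa
        have hGdisjF₀ : Disjoint F₀ (𝒢.biUnion id) := by
          rw [Finset.disjoint_left]
          intro a haF₀ haG
          obtain ⟨G, hG, haG'⟩ := Finset.mem_biUnion.mp haG
          have hmem : a ∈ F₀ ∩ G := Finset.mem_inter.mpr ⟨haF₀, haG'⟩
          rw [hF₀G G hG] at hmem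
          exact absurd hmem (Finset.notMem_empty a)
        have hUcard : (F₀ ∪ 𝒢.biUnion id).card = 𝒢.card * t + t := by
          rw [Finset.card_union_of_disjoint hGdisjF₀, hpure F₀ hF₀,
            card_biUnion_eq h𝒢d rfl fun G hG => hpure G (h𝒢f hG)]
          ring
        have hWcard : (ℋ.biUnion id).card = ℋ.card * t :=
          card_biUnion_eq hℋd rfl fun H hH => hpure H (hℋf hH)
        have hWU : ℋ.biUnion id ⊆ F₀ ∪ 𝒢.biUnion id := Finset.biUnion_subset.mpr hsub
        have hx₀W : x₀ ∉ ℋ.biUnion id := by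
          intro hx₀W
          obtain ⟨H, hH, hx₀H⟩ := Finset.mem_biUnion.mp hx₀W
          have h := hH' H hH ⟨x₀, Finset.mem_inter.mpr ⟨hx₀H, hx₀F₀⟩⟩
          exact hx₀Ha (h ▸ hx₀H)
        have hWlt : (ℋ.biUnion id).card < (F₀ ∪ 𝒢.biUnion id).card :=
          Finset.card_lt_card ((Finset.ssubset_iff_of_subset hWU).mpr
            ⟨x₀, Finset.mem_union_left _ hx₀F₀, hx₀W⟩)
        have hrm : ℋ.card = 𝒢.card := by
          have hmul : ℋ.card * t < (𝒢.card + 1) * t := by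
            rw [hWcard, hUcard] at hWlt
            nlinarith
          have := (Nat.mul_lt_mul_right htpos).mp hmul
          omega
        have hUWcard : ((F₀ ∪ 𝒢.biUnion id) \ ℋ.biUnion id).card = t := by
          rw [Finset.card_sdiff_of_subset hWU, hUcard, hWcard, hrm]
          omega
        obtain ⟨G₁, hG₁, G₂, hG₂, hG12, hHaG₁, hHaG₂⟩ := htwo Ha hHa
        obtain ⟨G', hG'𝒢, hG'L, hHaG'⟩ : ∃ G' ∈ 𝒢, G' ≠ L ∧ (Ha ∩ G').Nonempty := by
          rcases eq_or_ne G₁ L with rfl | h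
          · exact ⟨G₂, hG₂, fun h => hG12 h.symm, hHaG₂⟩
          · exact ⟨G₁, hG₁, h, hHaG₁⟩
        have hsub1 : F₀ \ Ha ⊆ (F₀ ∪ 𝒢.biUnion id) \ ℋ.biUnion id := by
          intro x hx
          obtain ⟨hxF₀, hxHa⟩ := Finset.mem_sdiff.mp hx
          refine Finset.mem_sdiff.mpr ⟨Finset.mem_union_left _ hxF₀, ?_⟩
          intro hxW
          obtain ⟨H, hH, hxH⟩ := Finset.mem_biUnion.mp hxW
          have h := hH' H hH ⟨x, Finset.mem_inter.mpr ⟨hxH, hxF₀⟩⟩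
          exact hxHa (h ▸ hxH)
        have hsub2 : L \ Ha ⊆ (F₀ ∪ 𝒢.biUnion id) \ ℋ.biUnion id := by
          intro x hx
          obtain ⟨hxL, hxHa⟩ := Finset.mem_sdiff.mp hx
          refine Finset.mem_sdiff.mpr
            ⟨Finset.mem_union_right _ (Finset.mem_biUnion.mpr ⟨L, hL𝒢, hxL⟩), ?_⟩
          intro hxW
          obtain ⟨H, hH, hxH⟩ := Finset.mem_biUnion.mp hxW
          rcases eq_or_ne H Ha with rfl | hne
          · exact hxHa hxH
          · have hmem : x ∈ H ∩ L := Finset.mem_inter.mpr ⟨hxH, hxL⟩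
            rw [huniq H hH hne] at hmem
            exact absurd hmem (Finset.notMem_empty x)
        have hdisj12 : Disjoint (F₀ \ Ha) (L \ Ha) := by
          rw [Finset.disjoint_left]
          intro a ha hb
          have hmem : a ∈ F₀ ∩ L := Finset.mem_inter.mpr
            ⟨(Finset.mem_sdiff.mp ha).1, (Finset.mem_sdiff.mp hb).1⟩
          rw [hF₀G L hL𝒢] at hmem
          exact absurd hmem (Finset.notMem_empty a)
        have hcard12 : (F₀ \ Ha).card + (L \ Ha).card ≤ t := by
          calc (F₀ \ Ha).card + (L \ Ha).card
              = ((F₀ \ Ha) ∪ (L \ Ha)).card := (Finset.card_union_of_disjoint hdisj12).symm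
            _ ≤ ((F₀ ∪ 𝒢.biUnion id) \ ℋ.biUnion id).card :=
                Finset.card_le_card (Finset.union_subset hsub1 hsub2)
            _ = t := hUWcard
        -- three pairwise disjoint pieces of Ha
        have hd1 : Disjoint (Ha ∩ F₀) (Ha ∩ L) := by
          rw [Finset.disjoint_left]
          intro a ha hb
          have hmem : a ∈ F₀ ∩ L := Finset.mem_inter.mpr
            ⟨(Finset.mem_inter.mp ha).2, (Finset.mem_inter.mp hb).2⟩
          rw [hF₀G L hL𝒢] at hmem
          exact absurd hmem (Finset.notMem_empty a)
        have hd2 : Disjoint (Ha ∩ F₀ ∪ Ha ∩ L) (Ha ∩ G') := by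
          rw [Finset.disjoint_left]
          intro a ha hb
          rcases Finset.mem_union.mp ha with h | h
          · have hmem : a ∈ F₀ ∩ G' := Finset.mem_inter.mpr
              ⟨(Finset.mem_inter.mp h).2, (Finset.mem_inter.mp hb).2⟩
            rw [hF₀G G' hG'𝒢] at hmem
            exact absurd hmem (Finset.notMem_empty a)
          · have hmem : a ∈ L ∩ G' := Finset.mem_inter.mpr
              ⟨(Finset.mem_inter.mp h).2, (Finset.mem_inter.mp hb).2⟩
            rw [h𝒢d L hL𝒢 G' hG'𝒢 (fun h => hG'L h.symm)] at hmem
            exact absurd hmem (Finset.notMem_empty a)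
        have hsum3 : (Ha ∩ F₀).card + (Ha ∩ L).card + (Ha ∩ G').card ≤ t := by
          calc (Ha ∩ F₀).card + (Ha ∩ L).card + (Ha ∩ G').card
              = (Ha ∩ F₀ ∪ Ha ∩ L).card + (Ha ∩ G').card := by
                rw [Finset.card_union_of_disjoint hd1]
            _ = ((Ha ∩ F₀ ∪ Ha ∩ L) ∪ Ha ∩ G').card := (Finset.card_union_of_disjoint hd2).symm
            _ ≤ Ha.card := Finset.card_le_card (by
                refine Finset.union_subset (Finset.union_subset ?_ ?_) ?_ <;>
                  exact Finset.inter_subset_left)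
            _ = t := hpure Ha (hℋf hHa)
        have e1 : (F₀ ∩ Ha).card + (F₀ \ Ha).card = t := by
          rw [Finset.card_inter_add_card_sdiff, hpure F₀ hF₀]
        have e2 : (L ∩ Ha).card + (L \ Ha).card = t := by
          rw [Finset.card_inter_add_card_sdiff, hpure L (h𝒢f hL𝒢)]
        have e3 : (Ha ∩ F₀).card = (F₀ ∩ Ha).card := by rw [Finset.inter_comm]
        have e4 : (Ha ∩ L).card = (L ∩ Ha).card := by rw [Finset.inter_comm]
        have e5 : 0 < (Ha ∩ G').card := Finset.card_pos.mpr hHaG'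
        omega
    · -- L ∈ ℋ : impossible
      obtain ⟨G₁, hG₁, G₂, hG₂, hG12, h1, h2⟩ := htwo L hLℋ
      have h1' : (G₁ ∩ L).Nonempty := by rwa [Finset.inter_comm] at h1
      have h2' : (G₂ ∩ L).Nonempty := by rwa [Finset.inter_comm] at h2
      have hG₁L : G₁ ≠ L := fun h => hHG L hLℋ (h ▸ hG₁)
      have hG₂L : G₂ ≠ L := fun h => hHG L hLℋ (h ▸ hG₂)
      rcases Finset.mem_union.mp hJS with hJ𝒢 | hJℋ
      · obtain ⟨Gi, hGi, hGiJ, hGiL, hLGi⟩ : ∃ Gi ∈ 𝒢, Gi ≠ J ∧ Gi ≠ L ∧ (Gi ∩ L).Nonempty := by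
          rcases eq_or_ne G₁ J with rfl | h
          · exact ⟨G₂, hG₂, fun hh => hG12 hh.symm, hG₂L, h2'⟩
          · exact ⟨G₁, hG₁, h, hG₁L, h1'⟩
        obtain ⟨x, hx⟩ := hLGi
        have hx' := hjoint Gi (Finset.mem_union_left _ hGi) hGiL hx
        have hmem : x ∈ Gi ∩ J := Finset.mem_inter.mpr
          ⟨(Finset.mem_inter.mp hx).1, (Finset.mem_inter.mp hx').1⟩
        rw [h𝒢d Gi hGi J hJ𝒢 hGiJ] at hmem
        exact absurd hmem (Finset.notMem_empty x)
      · obtain ⟨x, hx⟩ := h1'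
        have hx' := hjoint G₁ (Finset.mem_union_left _ hG₁) hG₁L hx
        have hmem : x ∈ J ∩ L := hx'
        rw [hℋd J hJℋ L hLℋ hJL] at hmem
        exact absurd hmem (Finset.notMem_empty x)


end SqfAux

/-- For a pure simplicial forest whose facets have cardinality
`t ≥ 2` and `1 ≤ k < ν₀(Δ)`, the squarefree power `I(Δ)^{[k]}` is not linearly
related: some pair of minimal monomial generators `u`, `v` is not connected by
a path in `G^{(u,v)}_{I(Δ)^{[k]}}`. -/
theorem sqfreePower_not_linearly_related
    (K : Type) [Field K] {V : Type} [DecidableEq V]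
    (Δ : SimplicialComplex V) (hΔ : Δ.IsForest)
    (t : ℕ) (ht : 2 ≤ t) (hpure : ∀ F ∈ Δ.facets, F.card = t)
    (k : ℕ) (hk1 : 1 ≤ k) (hk2 : k < Δ.restrictedMatchingNumber) :
    ∃ a b : V →₀ ℕ,
      IsMinGen (sqfreePower K Δ k) (monomial a (1 : K)) ∧
      IsMinGen (sqfreePower K Δ k) (monomial b (1 : K)) ∧
      ¬ Relation.ReflTransGen (EdgeRel K (sqfreePower K Δ k) (k * t) (a ⊔ b)) a b := by
  classical
  have espan : sqfreePower K Δ k = matchPow K Δ.facets k := rfl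
  -- extract a restricted matching of size > k
  obtain ⟨M, hMrm, hMcard⟩ : ∃ M, Δ.IsRestrictedMatching M ∧ k < M.card := by
    by_contra h
    push_neg at h
    have hub : Δ.restrictedMatchingNumber ≤ k := by
      apply csSup_le'
      rintro r ⟨M, hM, rfl⟩
      exact h M hM
    omega
  obtain ⟨⟨hMfac, hMdisj⟩, F₀, hF₀M, hgapM⟩ := hMrm
  have hF₀fac : F₀ ∈ Δ.facets := hMfac hF₀M
  have hF₀card : F₀.card = t := hpure F₀ hF₀fac
  obtain ⟨𝒢, h𝒢sub, h𝒢card⟩ := Finset.exists_subset_card_eq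
    (show k ≤ (M.erase F₀).card by rw [Finset.card_erase_of_mem hF₀M]; omega)
  have h𝒢M : ∀ G ∈ 𝒢, G ∈ M := fun G hG => Finset.mem_of_mem_erase (h𝒢sub hG)
  have h𝒢ne : ∀ G ∈ 𝒢, G ≠ F₀ := fun G hG => (Finset.mem_erase.mp (h𝒢sub hG)).1
  have hgap : ∀ G ∈ 𝒢, Δ.FormGap F₀ G := fun G hG => hgapM G (h𝒢M G hG) (h𝒢ne G hG)
  have h𝒢fac : 𝒢 ⊆ Δ.facets := fun G hG => hMfac (h𝒢M G hG)
  have h𝒢d : ∀ G ∈ 𝒢, ∀ G' ∈ 𝒢, G ≠ G' → G ∩ G' = ∅ :=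
    fun G hG G' hG' hne => hMdisj G (h𝒢M G hG) G' (h𝒢M G' hG') hne
  have hF₀G : ∀ G ∈ 𝒢, F₀ ∩ G = ∅ := fun G hG => (hgap G hG).2.2.1
  have hF₀not𝒢 : F₀ ∉ 𝒢 := fun h => (h𝒢ne F₀ h) rfl
  obtain ⟨g, hg⟩ : 𝒢.Nonempty := Finset.card_pos.mp (by rw [h𝒢card]; omega)
  set Ma : Finset (Finset V) := insert F₀ (𝒢.erase g) with hMadef
  have hMamem : ∀ X ∈ Ma, X ∈ M := by
    intro X hX
    rcases Finset.mem_insert.mp hX with rfl | hX'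
    · exact hF₀M
    · exact h𝒢M X (Finset.mem_of_mem_erase hX')
  have hMasub : Ma ⊆ Δ.facets := fun X hX => hMfac (hMamem X hX)
  have hMad : ∀ X ∈ Ma, ∀ Y ∈ Ma, X ≠ Y → X ∩ Y = ∅ :=
    fun X hX Y hY hne => hMdisj X (hMamem X hX) Y (hMamem Y hY) hne
  have hF₀notin : F₀ ∉ 𝒢.erase g := fun h => hF₀not𝒢 (Finset.mem_of_mem_erase h)
  have hMacard : Ma.card = k := by
    rw [hMadef, Finset.card_insert_of_notMem hF₀notin, Finset.card_erase_of_mem hg, h𝒢card]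
    omega
  set A := Ma.biUnion id with hAdef
  set B := 𝒢.biUnion id with hBdef
  have hminA : IsMinGen (sqfreePower K Δ k) ((monomial (SqfAux.indF A)) (1 : K)) := by
    rw [espan]; exact SqfAux.isMinGen_matching K hpure hMasub hMad hMacard
  have hminB : IsMinGen (sqfreePower K Δ k) ((monomial (SqfAux.indF B)) (1 : K)) := by
    rw [espan]; exact SqfAux.isMinGen_matching K hpure h𝒢fac h𝒢d h𝒢card
  refine ⟨SqfAux.indF A, SqfAux.indF B, hminA, hminB, ?_⟩
  intro hpath
  have hAB : SqfAux.indF A ⊔ SqfAux.indF B = SqfAux.indF (F₀ ∪ B) := by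
    rw [SqfAux.indF_sup]
    congr 1
    apply Finset.Subset.antisymm
    · refine Finset.union_subset ?_ Finset.subset_union_right
      intro x hx
      obtain ⟨X, hX, hxX⟩ := Finset.mem_biUnion.mp hx
      rcases Finset.mem_insert.mp hX with rfl | hX'
      · exact Finset.mem_union_left _ hxX
      · exact Finset.mem_union_right _
          (Finset.mem_biUnion.mpr ⟨X, Finset.mem_of_mem_erase hX', hxX⟩)
    · refine Finset.union_subset ?_ Finset.subset_union_right
      refine Finset.Subset.trans ?_ Finset.subset_union_left
      exact fun x hx => Finset.mem_biUnion.mpr ⟨F₀, Finset.mem_insert_self _ _, hx⟩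
  have key : ∀ c, Relation.ReflTransGen (EdgeRel K (sqfreePower K Δ k) (k * t)
      (SqfAux.indF A ⊔ SqfAux.indF B)) (SqfAux.indF A) c → SqfAux.indF F₀ ≤ c := by
    intro c h
    induction h with
    | refl =>
      refine SqfAux.indF_le_iff.mpr fun x hx =>
        Finset.mem_biUnion.mpr ⟨F₀, Finset.mem_insert_self _ _, hx⟩
    | @tail p q hrt hedge ih =>
      obtain ⟨hminp, hminq, hple, hqle, hdeg⟩ := hedge
      obtain ⟨Np, hNp1, hNp2, hNp3, hpeq⟩ := SqfAux.matching_of_isMinGen K (espan ▸ hminp)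
      obtain ⟨Nq, hNq1, hNq2, hNq3, hqeq⟩ := SqfAux.matching_of_isMinGen K (espan ▸ hminq)
      by_cases hF₀Nq : F₀ ∈ Nq
      · rw [hqeq]
        exact SqfAux.indF_le_iff.mpr fun x hx => Finset.mem_biUnion.mpr ⟨F₀, hF₀Nq, hx⟩
      · exfalso
        have hF₀P : F₀ ⊆ Np.biUnion id := SqfAux.indF_le_iff.mp (by rw [← hpeq]; exact ih)
        have hPcard : (Np.biUnion id).card = k * t :=
          SqfAux.card_biUnion_eq hNp2 hNp3 fun F hF => hpure F (hNp1 hF)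
        have hQcard : (Nq.biUnion id).card = k * t :=
          SqfAux.card_biUnion_eq hNq2 hNq3 fun F hF => hpure F (hNq1 hF)
        rw [hpeq, hqeq, SqfAux.indF_sup, SqfAux.degOf_indF] at hdeg
        have hPdiff : (Np.biUnion id \ Nq.biUnion id).card ≤ 1 := by
          have hc := Finset.card_sdiff_add_card (s := Np.biUnion id) (t := Nq.biUnion id)
          omega
        have hQtouch : ∃ x, x ∈ Nq.biUnion id ∧ x ∈ F₀ := by
          by_contra hno
          push_neg at hno
          have hsubd : F₀ ⊆ Np.biUnion id \ Nq.biUnion id := fun x hx =>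
            Finset.mem_sdiff.mpr ⟨hF₀P hx, fun hq => hno x hq hx⟩
          have := Finset.card_le_card hsubd
          rw [hF₀card] at this
          omega
        obtain ⟨x, hxQ, hxF₀⟩ := hQtouch
        obtain ⟨H, hHNq, hxH⟩ := Finset.mem_biUnion.mp hxQ
        have hQsub : Nq.biUnion id ⊆ F₀ ∪ B := by
          rw [hqeq, hAB] at hqle
          exact SqfAux.indF_le_iff.mp hqle
        exact SqfAux.lemA hΔ hpure hF₀fac (𝒢.card + Nq.card) 𝒢 Nq le_rfl h𝒢fac h𝒢d hgap
          hNq1 hNq2 hF₀Nq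
          (fun H' hH' => Finset.Subset.trans
            (Finset.subset_biUnion_of_mem id hH') hQsub)
          ⟨H, hHNq, ⟨x, Finset.mem_inter.mpr ⟨hxH, hxF₀⟩⟩⟩
          (by rw [hNq3, h𝒢card])
  have hF₀B : F₀ ⊆ B := SqfAux.indF_le_iff.mp (key _ hpath)
  obtain ⟨x, hxF₀⟩ : F₀.Nonempty := Finset.card_pos.mp (by rw [hF₀card]; omega)
  obtain ⟨G, hG, hxG⟩ := Finset.mem_biUnion.mp (hF₀B hxF₀)
  have hmem : x ∈ F₀ ∩ G := Finset.mem_inter.mpr ⟨hxF₀, hxG⟩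
  rw [hF₀G G hG] at hmem
  exact absurd hmem (Finset.notMem_empty x)


end
end

section
/- Let Δ be a simplicial tree and let M = {F₁, …, F_s} and N = {G₁, …, G_s} be two s-matchings of Δ. Then there exist indices i, j ∈ {1, …, s} such that F_i ∩ G_k = ∅ for all k ≠ j. -/
noncomputable section

open Finset MvPolynomial

/-- Given two `s`-matchings `M`, `N` of a simplicial tree,
there is a facet of `M` meeting at most one facet of `N`. -/
theorem exists_facet_meeting_at_most_one
    {V : Type} [DecidableEq V] (Δ : SimplicialComplex V) (hΔ : Δ.IsTree)
    (s : ℕ) (hs : 1 ≤ s) (M N : Finset (Finset V))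
    (hM : Δ.IsMatching M) (hN : Δ.IsMatching N)
    (hMs : M.card = s) (hNs : N.card = s) :
    ∃ F ∈ M, ∃ G ∈ N, ∀ G' ∈ N, G' ≠ G → F ∩ G' = ∅ := by
  classical
  induction s using Nat.strong_induction_on generalizing M N with
  | _ s IH =>
  have hMne : M.Nonempty := Finset.card_pos.mp (by omega)
  have hNne : N.Nonempty := Finset.card_pos.mp (by omega)
  have hSsub : M ∪ N ⊆ Δ.facets := Finset.union_subset hM.1 hN.1
  have hSne : (M ∪ N).Nonempty := hMne.mono Finset.subset_union_left
  obtain ⟨F, hFS, hleaf⟩ := hΔ.2 (M ∪ N) hSsub hSne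
  rcases hleaf with hsingle | ⟨G₀, hG₀S, hG₀F, hjoint⟩
  · -- the subcomplex is a single facet
    have hMsub : M ⊆ ({F} : Finset (Finset V)) := hsingle ▸ Finset.subset_union_left
    have hNsub : N ⊆ ({F} : Finset (Finset V)) := hsingle ▸ Finset.subset_union_right
    obtain ⟨A, hA⟩ := hMne
    obtain ⟨B, hB⟩ := hNne
    have hFM : F ∈ M := Finset.mem_singleton.mp (hMsub hA) ▸ hA
    have hFN : F ∈ N := Finset.mem_singleton.mp (hNsub hB) ▸ hB
    exact ⟨F, hFM, F, hFN, fun G' hG' hne =>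
      absurd (Finset.mem_singleton.mp (hNsub hG')) hne⟩
  · by_cases hFM : F ∈ M
    · -- the leaf belongs to M
      by_cases hFN : F ∈ N
      · exact ⟨F, hFM, F, hFN, fun G' hG' hne => hN.2 F hFN G' hG' (Ne.symm hne)⟩
      · by_cases hG₀N : G₀ ∈ N
        · refine ⟨F, hFM, G₀, hG₀N, ?_⟩
          intro G' hG' hne
          have h1 := hjoint G' (Finset.mem_union_right _ hG')
            (by rintro rfl; exact hFN hG')
          have h2 := hN.2 G' hG' G₀ hG₀N hne
          rw [Finset.eq_empty_iff_forall_notMem]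
          intro x hx
          have hxF : x ∈ F := (Finset.mem_inter.mp hx).1
          have hxG' : x ∈ G' := (Finset.mem_inter.mp hx).2
          have hxG₀ : x ∈ G₀ :=
            (Finset.mem_inter.mp (h1 (Finset.mem_inter.mpr ⟨hxG', hxF⟩))).1
          have : x ∈ G' ∩ G₀ := Finset.mem_inter.mpr ⟨hxG', hxG₀⟩
          rw [h2] at this
          exact Finset.notMem_empty x this
        · have hG₀M : G₀ ∈ M := by
            rcases Finset.mem_union.mp hG₀S with h | h
            · exact h
            · exact absurd h hG₀N
          have hdis : G₀ ∩ F = ∅ := hM.2 G₀ hG₀M F hFM hG₀F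
          obtain ⟨G, hG⟩ := hNne
          refine ⟨F, hFM, G, hG, ?_⟩
          intro G' hG' _
          have h1 := hjoint G' (Finset.mem_union_right _ hG')
            (by rintro rfl; exact hFN hG')
          rw [hdis] at h1
          rw [Finset.inter_comm]
          exact Finset.subset_empty.mp h1
    · -- the leaf belongs to N only
      have hFN : F ∈ N := by
        rcases Finset.mem_union.mp hFS with h | h
        · exact absurd h hFM
        · exact h
      have key : ∃ H₀ ∈ M, ∀ H ∈ M, H ≠ H₀ → H ∩ F = ∅ := by
        by_cases hG₀M : G₀ ∈ M
        · refine ⟨G₀, hG₀M, ?_⟩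
          intro H hH hne
          have h1 := hjoint H (Finset.mem_union_left _ hH)
            (by rintro rfl; exact hFM hH)
          have h2 := hM.2 H hH G₀ hG₀M hne
          rw [Finset.eq_empty_iff_forall_notMem]
          intro x hx
          have hxH : x ∈ H := (Finset.mem_inter.mp hx).1
          have hxG₀ : x ∈ G₀ := (Finset.mem_inter.mp (h1 hx)).1
          have : x ∈ H ∩ G₀ := Finset.mem_inter.mpr ⟨hxH, hxG₀⟩
          rw [h2] at this
          exact Finset.notMem_empty x this
        · have hG₀N : G₀ ∈ N := by
            rcases Finset.mem_union.mp hG₀S with h | h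
            · exact absurd h hG₀M
            · exact h
          have hdis : G₀ ∩ F = ∅ := hN.2 G₀ hG₀N F hFN hG₀F
          obtain ⟨H₀, hH₀⟩ := hMne
          refine ⟨H₀, hH₀, fun H hH _ => ?_⟩
          have h1 := hjoint H (Finset.mem_union_left _ hH)
            (by rintro rfl; exact hFM hH)
          rw [hdis] at h1
          exact Finset.subset_empty.mp h1
      obtain ⟨H₀, hH₀M, hkey⟩ := key
      rcases eq_or_lt_of_le hs with hs1 | hs2
      · -- s = 1
        have hN1 : N = {F} := by
          obtain ⟨a, ha⟩ := Finset.card_eq_one.mp (hNs.trans hs1.symm)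
          rw [ha] at hFN ⊢
          rw [Finset.mem_singleton.mp hFN]
        refine ⟨H₀, hH₀M, F, hFN, ?_⟩
        intro G' hG' hne
        rw [hN1] at hG'
        exact absurd (Finset.mem_singleton.mp hG') hne
      · -- s ≥ 2 : induct with M \ {H₀}, N \ {F}
        have hM' : Δ.IsMatching (M.erase H₀) :=
          ⟨fun x hx => hM.1 (Finset.mem_of_mem_erase hx),
            fun A hA B hB h => hM.2 A (Finset.mem_of_mem_erase hA) B
              (Finset.mem_of_mem_erase hB) h⟩
        have hN' : Δ.IsMatching (N.erase F) :=
          ⟨fun x hx => hN.1 (Finset.mem_of_mem_erase hx),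
            fun A hA B hB h => hN.2 A (Finset.mem_of_mem_erase hA) B
              (Finset.mem_of_mem_erase hB) h⟩
        have hM'c : (M.erase H₀).card = s - 1 := by
          rw [Finset.card_erase_of_mem hH₀M, hMs]
        have hN'c : (N.erase F).card = s - 1 := by
          rw [Finset.card_erase_of_mem hFN, hNs]
        obtain ⟨F', hF'M', G', hG'N', hprop⟩ :=
          IH (s - 1) (by omega) (by omega) (M.erase H₀) (N.erase F) hM' hN' hM'c hN'c
        refine ⟨F', Finset.mem_of_mem_erase hF'M', G', Finset.mem_of_mem_erase hG'N', ?_⟩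
        intro G'' hG'' hne
        by_cases hG''F : G'' = F
        · subst hG''F
          exact hkey F' (Finset.mem_of_mem_erase hF'M') (Finset.ne_of_mem_erase hF'M')
        · exact hprop G'' (Finset.mem_erase.mpr ⟨hG''F, hG''⟩) hne

end
end

section
/- Let Δ be a pure simplicial tree and k ≥ 1. If every pair of minimal monomial generators u, v of I(Δ)^{[k]} is connected by a path in G^{(u,v)}_{I(Δ)^{[k]}} (i.e., I(Δ)^{[k]} is linearly related), then every pair of minimal monomial generators u, v of I(Δ)^{[k+1]} is connected by a path in G^{(u,v)}_{I(Δ)^{[k+1]}} (i.e., I(Δ)^{[k+1]} is linearly related). -/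
noncomputable section

open Finset MvPolynomial

set_option linter.unusedSectionVars false
namespace SFP

variable {V : Type} [DecidableEq V]

/-- indicator vector of a finset -/
def chi (F : Finset V) : V →₀ ℕ := ∑ v ∈ F, Finsupp.single v 1

lemma chi_apply (F : Finset V) (x : V) : chi F x = if x ∈ F then 1 else 0 := by
  classical
  rw [chi, Finset.sum_apply']
  simp only [Finsupp.single_apply]
  exact Finset.sum_ite_eq' F x (fun _ => 1)

lemma chi_apply_of_mem {F : Finset V} {x : V} (h : x ∈ F) : chi F x = 1 := by
  simp [chi_apply, h]

lemma chi_apply_of_not_mem {F : Finset V} {x : V} (h : x ∉ F) : chi F x = 0 := by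
  simp [chi_apply, h]

/-- the exponent vector of a matching -/
def mvec (M : Finset (Finset V)) : V →₀ ℕ := ∑ F ∈ M, chi F

lemma degOf_add (u v : V →₀ ℕ) : degOf (u + v) = degOf u + degOf v :=
  Finsupp.sum_add_index' (by simp) (fun _ _ _ => rfl)

lemma degOf_chi (F : Finset V) : degOf (chi F) = F.card := by
  classical
  induction F using Finset.induction_on with
  | empty => simp [chi, degOf]
  | @insert a s h ih =>
    have h1 : degOf (Finsupp.single a (1:ℕ)) = 1 := Finsupp.sum_single_index rfl
    rw [chi, Finset.sum_insert h, ← chi, degOf_add, ih, Finset.card_insert_of_notMem h, h1,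
      add_comm]

lemma degOf_mvec_sum (M : Finset (Finset V)) : degOf (mvec M) = ∑ F ∈ M, F.card := by
  classical
  induction M using Finset.induction_on with
  | empty => simp [mvec, degOf]
  | @insert a s h ih =>
    rw [mvec, Finset.sum_insert h, ← mvec, degOf_add, ih, Finset.sum_insert h, degOf_chi]

lemma degOf_eq_zero {d : V →₀ ℕ} (h : degOf d = 0) : d = 0 := by
  ext x
  by_cases hx : x ∈ d.support
  · simpa using Finset.sum_eq_zero_iff.mp h x hx
  · simpa using Finsupp.notMem_support_iff.mp hx

lemma degOf_mono {u w : V →₀ ℕ} (h : u ≤ w) : degOf u ≤ degOf w := by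
  have h1 : u + (w - u) = w := add_tsub_cancel_of_le h
  have := degOf_add u (w - u)
  rw [h1] at this
  omega

lemma eq_of_le_of_degOf_le {u w : V →₀ ℕ} (h : u ≤ w) (hd : degOf w ≤ degOf u) : u = w := by
  have h1 : u + (w - u) = w := add_tsub_cancel_of_le h
  have h2 := degOf_add u (w - u)
  rw [h1] at h2
  have h3 : degOf (w - u) = 0 := by omega
  rw [degOf_eq_zero h3, add_zero] at h1
  exact h1

lemma chi_le_mvec {F : Finset V} {M : Finset (Finset V)} (h : F ∈ M) : chi F ≤ mvec M :=
  Finset.single_le_sum (fun _ _ => zero_le) h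

lemma mvec_mono {A M : Finset (Finset V)} (h : A ⊆ M) : mvec A ≤ mvec M :=
  Finset.sum_le_sum_of_subset h

lemma chi_add_mvec_erase {F : Finset V} {M : Finset (Finset V)} (h : F ∈ M) :
    chi F + mvec (M.erase F) = mvec M :=
  Finset.add_sum_erase M chi h

/-- pairwise disjointness -/
def PD (M : Finset (Finset V)) : Prop := ∀ F ∈ M, ∀ G ∈ M, F ≠ G → F ∩ G = ∅

lemma PD.mono {A M : Finset (Finset V)} (h : A ⊆ M) (hM : PD M) : PD A :=
  fun F hF G hG hne => hM F (h hF) G (h hG) hne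

lemma not_mem_of_inter_empty {F G : Finset V} {x : V} (h : F ∩ G = ∅) (hx : x ∈ F) : x ∉ G := by
  intro hxG
  have : x ∈ F ∩ G := Finset.mem_inter.mpr ⟨hx, hxG⟩
  simp [h] at this

lemma mvec_erase_apply_eq_zero {M : Finset (Finset V)} (hPD : PD M) {F : Finset V} (hF : F ∈ M)
    {x : V} (hx : x ∈ F) : mvec (M.erase F) x = 0 := by
  rw [mvec, Finset.sum_apply']
  refine Finset.sum_eq_zero fun G hG => ?_
  have hGF : G ≠ F := Finset.ne_of_mem_erase hG
  have : F ∩ G = ∅ := hPD F hF G (Finset.mem_of_mem_erase hG) (Ne.symm hGF)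
  exact chi_apply_of_not_mem (not_mem_of_inter_empty this hx)

lemma mvec_apply_eq_zero_of_disj {N : Finset (Finset V)} {F : Finset V}
    (h : ∀ G ∈ N, F ∩ G = ∅) {x : V} (hx : x ∈ F) : mvec N x = 0 := by
  rw [mvec, Finset.sum_apply']
  exact Finset.sum_eq_zero fun G hG => chi_apply_of_not_mem (not_mem_of_inter_empty (h G hG) hx)

lemma add_le_of_disj {u w m : V →₀ ℕ} (hu : u ≤ m) (hw : w ≤ m)
    (hd : ∀ x, u x = 0 ∨ w x = 0) : u + w ≤ m := by
  rw [Finsupp.le_def] at *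
  intro x
  rcases hd x with h | h <;> simp only [Finsupp.add_apply, h, zero_add, add_zero]
  · exact hw x
  · exact hu x

lemma sup_add_right (u v w : V →₀ ℕ) : (u ⊔ v) + w = (u + w) ⊔ (v + w) := by
  ext x
  simp only [Finsupp.add_apply, Finsupp.sup_apply]
  exact (max_add_add_right (u x) (v x) (w x)).symm


lemma chi_insert {a : V} {s : Finset V} (h : a ∉ s) :
    chi (insert a s) = Finsupp.single a 1 + chi s := by
  rw [chi, Finset.sum_insert h, ← chi]

lemma mvec_insert {a : Finset V} {s : Finset (Finset V)} (h : a ∉ s) :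
    mvec (insert a s) = chi a + mvec s := by
  rw [mvec, Finset.sum_insert h, ← mvec]

lemma prod_X_eq (K : Type) [Field K] (F : Finset V) :
    ∏ v ∈ F, (X v : MvPolynomial V K) = monomial (chi F) 1 := by
  classical
  induction F using Finset.induction_on with
  | empty => simp [chi]
  | @insert a s h ih =>
    rw [Finset.prod_insert h, ih, chi_insert h]
    rw [show (X a : MvPolynomial V K) = monomial (Finsupp.single a 1) 1 from rfl, monomial_mul,
      one_mul]

lemma prod_prod_eq (K : Type) [Field K] (M : Finset (Finset V)) :
    ∏ F ∈ M, ∏ v ∈ F, (X v : MvPolynomial V K) = monomial (mvec M) 1 := by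
  classical
  induction M using Finset.induction_on with
  | empty => simp [mvec]
  | @insert a s h ih =>
    rw [Finset.prod_insert h, ih, prod_X_eq, monomial_mul, one_mul, mvec_insert h]

lemma matchPow_eq (K : Type) [Field K] (ℱ : Finset (Finset V)) (k : ℕ) :
    matchPow K ℱ k = Ideal.span ((fun d => monomial d (1 : K)) ''
      {d | ∃ M : Finset (Finset V), M ⊆ ℱ ∧ PD M ∧ M.card = k ∧ d = mvec M}) := by
  unfold matchPow
  congr 1
  ext p
  constructor
  · rintro ⟨M, h1, h2, h3, rfl⟩
    exact ⟨mvec M, ⟨M, h1, h2, h3, rfl⟩, (prod_prod_eq K M).symm⟩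
  · rintro ⟨d, ⟨M, h1, h2, h3, rfl⟩, rfl⟩
    exact ⟨M, h1, h2, h3, (prod_prod_eq K M).symm⟩

lemma monomial_mem_matchPow {K : Type} [Field K] {ℱ : Finset (Finset V)} {k : ℕ} {e : V →₀ ℕ} :
    monomial e (1 : K) ∈ matchPow K ℱ k ↔
      ∃ M : Finset (Finset V), M ⊆ ℱ ∧ PD M ∧ M.card = k ∧ mvec M ≤ e := by
  classical
  rw [matchPow_eq, mem_ideal_span_monomial_image]
  rw [support_monomial, if_neg (one_ne_zero)]
  constructor
  · intro h
    obtain ⟨si, ⟨M, h1, h2, h3, rfl⟩, hle⟩ := h e (Finset.mem_singleton_self e)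
    exact ⟨M, h1, h2, h3, hle⟩
  · rintro ⟨M, h1, h2, h3, hle⟩ xi hxi
    rw [Finset.mem_singleton] at hxi
    subst hxi
    exact ⟨mvec M, ⟨M, h1, h2, h3, rfl⟩, hle⟩

lemma monomial_dvd_of_le {K : Type} [Field K] {a b : V →₀ ℕ} (h : a ≤ b) :
    monomial a (1 : K) ∣ monomial b 1 :=
  monomial_dvd_monomial.mpr ⟨Or.inr h, dvd_rfl⟩

lemma isMinGen_matchPow_iff {K : Type} [Field K] {Δ : SimplicialComplex V} {t k : ℕ}
    (hpure : ∀ F ∈ Δ.facets, F.card = t) {a : V →₀ ℕ} :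
    IsMinGen (sqfreePower K Δ k) (monomial a (1 : K)) ↔
      ∃ M : Finset (Finset V), M ⊆ Δ.facets ∧ PD M ∧ M.card = k ∧ mvec M = a := by
  classical
  have hdeg : ∀ M : Finset (Finset V), M ⊆ Δ.facets → M.card = k → degOf (mvec M) = k * t := by
    intro M hMf hMc
    rw [degOf_mvec_sum]
    rw [Finset.sum_congr rfl fun F hF => hpure F (hMf hF), Finset.sum_const, hMc, smul_eq_mul]
  constructor
  · rintro ⟨-, hmem, hmin⟩
    obtain ⟨M, h1, h2, h3, hle⟩ := monomial_mem_matchPow.mp hmem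
    have hM : monomial (mvec M) (1 : K) ∈ sqfreePower K Δ k :=
      monomial_mem_matchPow.mpr ⟨M, h1, h2, h3, le_rfl⟩
    have := hmin (monomial (mvec M) 1) ⟨mvec M, rfl⟩ hM (monomial_dvd_of_le hle)
    have heq : mvec M = a := monomial_left_injective (one_ne_zero (α := K)) this
    exact ⟨M, h1, h2, h3, heq⟩
  · rintro ⟨M, h1, h2, h3, rfl⟩
    refine ⟨⟨mvec M, rfl⟩, monomial_mem_matchPow.mpr ⟨M, h1, h2, h3, le_rfl⟩, ?_⟩
    rintro v ⟨e, rfl⟩ hv hdvd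
    obtain ⟨P, hp1, hp2, hp3, hple⟩ := monomial_mem_matchPow.mp hv
    have hea : e ≤ mvec M := by
      rcases monomial_dvd_monomial.mp hdvd with ⟨h' | h', -⟩
      · exact absurd h' one_ne_zero
      · exact h'
    have : e = mvec M := by
      refine eq_of_le_of_degOf_le hea ?_
      calc degOf (mvec M) = k * t := hdeg M h1 h3
        _ = degOf (mvec P) := (hdeg P hp1 hp3).symm
        _ ≤ degOf e := degOf_mono hple
    rw [this]

lemma isMinGen_add_chi {K : Type} [Field K] {Δ : SimplicialComplex V} {t k : ℕ}
    (hpure : ∀ F ∈ Δ.facets, F.card = t) (ht : t ≠ 0) {F : Finset V} (hF : F ∈ Δ.facets)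
    {u : V →₀ ℕ} (hu : IsMinGen (sqfreePower K Δ k) (monomial u (1 : K)))
    (hz : ∀ x ∈ F, u x = 0) :
    IsMinGen (sqfreePower K Δ (k + 1)) (monomial (u + chi F) (1 : K)) := by
  obtain ⟨P, h1, h2, h3, rfl⟩ := (isMinGen_matchPow_iff hpure).mp hu
  have hFne : F.Nonempty := by
    rw [← Finset.card_pos, hpure F hF]
    omega
  have hdisjP : ∀ G ∈ P, F ∩ G = ∅ := by
    intro G hG
    rw [Finset.eq_empty_iff_forall_notMem]
    intro x hx
    rw [Finset.mem_inter] at hx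
    have h4 : chi G x ≤ mvec P x := Finsupp.le_def.mp (chi_le_mvec hG) x
    rw [chi_apply_of_mem hx.2, hz x hx.1] at h4
    omega
  have hFP : F ∉ P := by
    intro hFP
    obtain ⟨x, hx⟩ := hFne
    have := hdisjP F hFP
    rw [Finset.inter_self] at this
    rw [this] at hx
    simp at hx
  refine (isMinGen_matchPow_iff hpure).mpr ⟨insert F P, ?_, ?_, ?_, ?_⟩
  · exact Finset.insert_subset hF h1
  · intro A hA B hB hne
    rcases Finset.mem_insert.mp hA with rfl | hA' <;> rcases Finset.mem_insert.mp hB with rfl | hB'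
    · exact absurd rfl hne
    · exact hdisjP B hB'
    · rw [Finset.inter_comm]; exact hdisjP A hA'
    · exact h2 A hA' B hB' hne
  · rw [Finset.card_insert_of_notMem hFP, h3]
  · rw [mvec_insert hFP, add_comm]

lemma edgeRel_lift {K : Type} [Field K] {Δ : SimplicialComplex V} {t k : ℕ}
    (hpure : ∀ F ∈ Δ.facets, F.card = t) (ht : t ≠ 0) {F : Finset V} (hF : F ∈ Δ.facets)
    {m' m : V →₀ ℕ} (hm' : m' ≤ m) (hchi : chi F ≤ m) (hzm : ∀ x ∈ F, m' x = 0)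
    {u v : V →₀ ℕ} (he : EdgeRel K (sqfreePower K Δ k) (k * t) m' u v) :
    EdgeRel K (sqfreePower K Δ (k + 1)) ((k + 1) * t) m (u + chi F) (v + chi F) := by
  obtain ⟨hu, hv, hum, hvm, hdeg⟩ := he
  have hzu : ∀ x ∈ F, u x = 0 := by
    intro x hx
    have := Finsupp.le_def.mp hum x
    rw [hzm x hx] at this
    omega
  have hzv : ∀ x ∈ F, v x = 0 := by
    intro x hx
    have := Finsupp.le_def.mp hvm x
    rw [hzm x hx] at this
    omega
  have hle : ∀ {w : V →₀ ℕ}, w ≤ m' → (∀ x ∈ F, w x = 0) → w + chi F ≤ m := by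
    intro w hw hzw
    refine add_le_of_disj (hw.trans hm') hchi fun x => ?_
    by_cases hx : x ∈ F
    · exact Or.inl (hzw x hx)
    · exact Or.inr (chi_apply_of_not_mem hx)
  refine ⟨isMinGen_add_chi hpure ht hF hu hzu, isMinGen_add_chi hpure ht hF hv hzv,
    hle hum hzu, hle hvm hzv, ?_⟩
  rw [← sup_add_right, degOf_add, hdeg, degOf_chi, hpure F hF]
  ring

lemma path_common {K : Type} [Field K] {Δ : SimplicialComplex V} {t k : ℕ}
    (hpure : ∀ F ∈ Δ.facets, F.card = t) (ht : t ≠ 0)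
    (h : LinearlyRelatedVia K (sqfreePower K Δ k) (k * t))
    {M N : Finset (Finset V)} (hMf : M ⊆ Δ.facets) (hMp : PD M) (hMc : M.card = k + 1)
    (hNf : N ⊆ Δ.facets) (hNp : PD N) (hNc : N.card = k + 1)
    {G : Finset V} (hGM : G ∈ M) (hGN : G ∈ N)
    {m : V →₀ ℕ} (hMm : mvec M ≤ m) (hNm : mvec N ≤ m) :
    Relation.ReflTransGen (EdgeRel K (sqfreePower K Δ (k + 1)) ((k + 1) * t) m)
      (mvec M) (mvec N) := by
  have hAc : (M.erase G).card = k := by rw [Finset.card_erase_of_mem hGM, hMc]; omega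
  have hBc : (N.erase G).card = k := by rw [Finset.card_erase_of_mem hGN, hNc]; omega
  have huA : IsMinGen (sqfreePower K Δ k) (monomial (mvec (M.erase G)) (1 : K)) :=
    (isMinGen_matchPow_iff hpure).mpr
      ⟨M.erase G, (Finset.erase_subset _ _).trans hMf, hMp.mono (Finset.erase_subset _ _), hAc, rfl⟩
  have huB : IsMinGen (sqfreePower K Δ k) (monomial (mvec (N.erase G)) (1 : K)) :=
    (isMinGen_matchPow_iff hpure).mpr
      ⟨N.erase G, (Finset.erase_subset _ _).trans hNf, hNp.mono (Finset.erase_subset _ _), hBc, rfl⟩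
  have hpath := h (mvec (M.erase G)) (mvec (N.erase G)) huA huB
  have hzm : ∀ x ∈ G, (mvec (M.erase G) ⊔ mvec (N.erase G)) x = 0 := by
    intro x hx
    rw [Finsupp.sup_apply, mvec_erase_apply_eq_zero hMp hGM hx,
      mvec_erase_apply_eq_zero hNp hGN hx]
    rfl
  have hm' : mvec (M.erase G) ⊔ mvec (N.erase G) ≤ m :=
    sup_le ((mvec_mono (Finset.erase_subset _ _)).trans hMm)
      ((mvec_mono (Finset.erase_subset _ _)).trans hNm)
  have hchi : chi G ≤ m := (chi_le_mvec hGM).trans hMm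
  have hlift := Relation.ReflTransGen.lift (fun w => w + chi G)
    (fun a b hab => edgeRel_lift hpure ht (hMf hGM) hm' hchi hzm hab) _ _ hpath
  simp only [Function.onFun] at hlift
  rwa [add_comm (mvec (M.erase G)), add_comm (mvec (N.erase G)), chi_add_mvec_erase hGM,
    chi_add_mvec_erase hGN] at hlift

lemma path_case2 {K : Type} [Field K] {Δ : SimplicialComplex V} {t k : ℕ}
    (hpure : ∀ F ∈ Δ.facets, F.card = t) (ht : t ≠ 0) (hk : 1 ≤ k)
    (h : LinearlyRelatedVia K (sqfreePower K Δ k) (k * t))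
    {M N : Finset (Finset V)} (hMf : M ⊆ Δ.facets) (hMp : PD M) (hMc : M.card = k + 1)
    (hNf : N ⊆ Δ.facets) (hNp : PD N) (hNc : N.card = k + 1)
    {F₀ : Finset V} (hF₀M : F₀ ∈ M) (hF₀N : F₀ ∉ N)
    {J : Finset V} (hJN : J ∈ N) (hdisj : ∀ G ∈ N.erase J, F₀ ∩ G = ∅)
    {m : V →₀ ℕ} (hMm : mvec M ≤ m) (hNm : mvec N ≤ m) :
    Relation.ReflTransGen (EdgeRel K (sqfreePower K Δ (k + 1)) ((k + 1) * t) m)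
      (mvec M) (mvec N) := by
  have hAc : (M.erase F₀).card = k := by rw [Finset.card_erase_of_mem hF₀M, hMc]; omega
  have hBc : (N.erase J).card = k := by rw [Finset.card_erase_of_mem hJN, hNc]; omega
  have hBf : N.erase J ⊆ Δ.facets := (Finset.erase_subset _ _).trans hNf
  have hBp : PD (N.erase J) := hNp.mono (Finset.erase_subset _ _)
  have huA : IsMinGen (sqfreePower K Δ k) (monomial (mvec (M.erase F₀)) (1 : K)) :=
    (isMinGen_matchPow_iff hpure).mpr
      ⟨M.erase F₀, (Finset.erase_subset _ _).trans hMf, hMp.mono (Finset.erase_subset _ _),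
        hAc, rfl⟩
  have huB : IsMinGen (sqfreePower K Δ k) (monomial (mvec (N.erase J)) (1 : K)) :=
    (isMinGen_matchPow_iff hpure).mpr ⟨N.erase J, hBf, hBp, hBc, rfl⟩
  have hpath := h (mvec (M.erase F₀)) (mvec (N.erase J)) huA huB
  have hzm : ∀ x ∈ F₀, (mvec (M.erase F₀) ⊔ mvec (N.erase J)) x = 0 := by
    intro x hx
    rw [Finsupp.sup_apply, mvec_erase_apply_eq_zero hMp hF₀M hx,
      mvec_apply_eq_zero_of_disj hdisj hx]
    rfl
  have hm' : mvec (M.erase F₀) ⊔ mvec (N.erase J) ≤ m :=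
    sup_le ((mvec_mono (Finset.erase_subset _ _)).trans hMm)
      ((mvec_mono (Finset.erase_subset _ _)).trans hNm)
  have hchi : chi F₀ ≤ m := (chi_le_mvec hF₀M).trans hMm
  have hseg1 := Relation.ReflTransGen.lift (fun w => w + chi F₀)
    (fun a b hab => edgeRel_lift hpure ht (hMf hF₀M) hm' hchi hzm hab) _ _ hpath
  simp only [Function.onFun] at hseg1
  rw [add_comm (mvec (M.erase F₀)), chi_add_mvec_erase hF₀M] at hseg1
  -- hseg1 : path from mvec M to mvec (N.erase J) + chi F₀
  have hF₀B : F₀ ∉ N.erase J := fun hh => hF₀N (Finset.mem_of_mem_erase hh)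
  have hM'f : insert F₀ (N.erase J) ⊆ Δ.facets := Finset.insert_subset (hMf hF₀M) hBf
  have hM'p : PD (insert F₀ (N.erase J)) := by
    intro A hA B hB hne
    rcases Finset.mem_insert.mp hA with rfl | hA' <;> rcases Finset.mem_insert.mp hB with rfl | hB'
    · exact absurd rfl hne
    · exact hdisj B hB'
    · rw [Finset.inter_comm]; exact hdisj A hA'
    · exact hBp A hA' B hB' hne
  have hM'c : (insert F₀ (N.erase J)).card = k + 1 := by
    rw [Finset.card_insert_of_notMem hF₀B, hBc]
  have hM'm : mvec (insert F₀ (N.erase J)) ≤ m := by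
    rw [mvec_insert hF₀B]
    refine add_le_of_disj hchi ((mvec_mono (Finset.erase_subset _ _)).trans hNm) fun x => ?_
    by_cases hx : x ∈ F₀
    · exact Or.inr (mvec_apply_eq_zero_of_disj hdisj hx)
    · exact Or.inl (chi_apply_of_not_mem hx)
  have hBne : (N.erase J).Nonempty := Finset.card_pos.mp (by omega)
  obtain ⟨G₁, hG₁⟩ := hBne
  have hseg2 := path_common hpure ht h hM'f hM'p hM'c hNf hNp hNc
    (Finset.mem_insert_of_mem hG₁) (Finset.mem_of_mem_erase hG₁) hM'm hNm
  rw [mvec_insert hF₀B, add_comm (chi F₀)] at hseg2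
  exact hseg1.trans hseg2

lemma edgeRel_symm {K : Type} [Field K] {I : Ideal (MvPolynomial V K)} {d : ℕ} {m : V →₀ ℕ} :
    Symmetric (EdgeRel K I d m) := by
  rintro u v ⟨h1, h2, h3, h4, h5⟩
  refine ⟨h2, h1, h4, h3, ?_⟩
  rwa [sup_comm]

lemma path_leaf {K : Type} [Field K] {Δ : SimplicialComplex V} {t k : ℕ}
    (hpure : ∀ F ∈ Δ.facets, F.card = t) (ht : t ≠ 0) (hk : 1 ≤ k)
    (h : LinearlyRelatedVia K (sqfreePower K Δ k) (k * t))
    {M N : Finset (Finset V)} (hMf : M ⊆ Δ.facets) (hMp : PD M) (hMc : M.card = k + 1)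
    (hNf : N ⊆ Δ.facets) (hNp : PD N) (hNc : N.card = k + 1)
    (hMN : ∀ x ∈ M, x ∉ N)
    {F₀ : Finset V} (hF₀M : F₀ ∈ M)
    {J : Finset V} (hJS : J ∈ M ∪ N) (hJne : J ≠ F₀)
    (hleaf : ∀ H ∈ M ∪ N, H ≠ F₀ → H ∩ F₀ ⊆ J ∩ F₀)
    {m : V →₀ ℕ} (hMm : mvec M ≤ m) (hNm : mvec N ≤ m) :
    Relation.ReflTransGen (EdgeRel K (sqfreePower K Δ (k + 1)) ((k + 1) * t) m)
      (mvec M) (mvec N) := by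
  have hF₀N : F₀ ∉ N := hMN F₀ hF₀M
  have hNne : N.Nonempty := Finset.card_pos.mp (by omega)
  rcases Finset.mem_union.mp hJS with hJM | hJN
  · have hJF₀ : J ∩ F₀ = ∅ := hMp J hJM F₀ hF₀M hJne
    have hall : ∀ G ∈ N, F₀ ∩ G = ∅ := by
      intro G hG
      have hGne : G ≠ F₀ := fun e => hF₀N (e ▸ hG)
      have h1 := hleaf G (Finset.mem_union_right _ hG) hGne
      rw [hJF₀, Finset.subset_empty] at h1
      rw [Finset.inter_comm]
      exact h1
    obtain ⟨J', hJ'⟩ := hNne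
    exact path_case2 hpure ht hk h hMf hMp hMc hNf hNp hNc hF₀M hF₀N hJ'
      (fun G hG => hall G (Finset.mem_of_mem_erase hG)) hMm hNm
  · have hdisj : ∀ G ∈ N.erase J, F₀ ∩ G = ∅ := by
      intro G hG
      have hGN' := Finset.mem_of_mem_erase hG
      have hGJ : G ≠ J := Finset.ne_of_mem_erase hG
      have hGne : G ≠ F₀ := fun e => hF₀N (e ▸ hGN')
      have h1 := hleaf G (Finset.mem_union_right _ hGN') hGne
      have hGJe : G ∩ J = ∅ := hNp G hGN' J hJN hGJ
      rw [Finset.eq_empty_iff_forall_notMem]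
      intro x hx
      rw [Finset.mem_inter] at hx
      have hxJ : x ∈ J ∩ F₀ := h1 (Finset.mem_inter.mpr ⟨hx.2, hx.1⟩)
      have hxGJ : x ∈ G ∩ J := Finset.mem_inter.mpr ⟨hx.2, (Finset.mem_inter.mp hxJ).1⟩
      rw [hGJe] at hxGJ
      simp at hxGJ
    exact path_case2 hpure ht hk h hMf hMp hMc hNf hNp hNc hF₀M hF₀N hJN hdisj hMm hNm

end SFP

/-- For a pure simplicial tree, if `I(Δ)^{[k]}` is linearly
related (in the combinatorial Bigdeli–Herzog–Zheng sense), then so is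
`I(Δ)^{[k+1]}`. -/
theorem linearlyRelated_succ
    (K : Type) [Field K] {V : Type} [DecidableEq V]
    (Δ : SimplicialComplex V) (hΔ : Δ.IsTree)
    (t : ℕ) (hpure : ∀ F ∈ Δ.facets, F.card = t)
    (k : ℕ) (hk : 1 ≤ k)
    (h : LinearlyRelatedVia K (sqfreePower K Δ k) (k * t)) :
    LinearlyRelatedVia K (sqfreePower K Δ (k + 1)) ((k + 1) * t) := by
  classical
  intro a b ha hb
  obtain ⟨M, hMf, hMp, hMc, hMa⟩ := (SFP.isMinGen_matchPow_iff hpure).mp ha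
  obtain ⟨N, hNf, hNp, hNc, hNb⟩ := (SFP.isMinGen_matchPow_iff hpure).mp hb
  subst hMa
  subst hNb
  by_cases ht : t = 0
  · exfalso
    obtain ⟨F₁, hF₁, G₁, hG₁, hne⟩ := Finset.one_lt_card.mp (show 1 < M.card by omega)
    have e1 : F₁.card = 0 := by rw [hpure F₁ (hMf hF₁), ht]
    have e2 : G₁.card = 0 := by rw [hpure G₁ (hMf hG₁), ht]
    exact hne (by rw [Finset.card_eq_zero.mp e1, Finset.card_eq_zero.mp e2])
  have hMm : SFP.mvec M ≤ SFP.mvec M ⊔ SFP.mvec N := le_sup_left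
  have hNm : SFP.mvec N ≤ SFP.mvec M ⊔ SFP.mvec N := le_sup_right
  by_cases hcom : ∃ G, G ∈ M ∧ G ∈ N
  · obtain ⟨G, hGM, hGN⟩ := hcom
    exact SFP.path_common hpure ht h hMf hMp hMc hNf hNp hNc hGM hGN hMm hNm
  · push_neg at hcom
    have hMne : M.Nonempty := Finset.card_pos.mp (by omega)
    have hNne : N.Nonempty := Finset.card_pos.mp (by omega)
    have hS : M ∪ N ⊆ Δ.facets := Finset.union_subset hMf hNf
    obtain ⟨F₁, hF₁⟩ := hMne
    obtain ⟨F₀, hF₀S, hrest⟩ := hΔ.2 (M ∪ N) hS ⟨F₁, Finset.mem_union_left N hF₁⟩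
    rcases hrest with hsing | ⟨J, hJS, hJne, hleaf⟩
    · exfalso
      obtain ⟨G₁, hG₁⟩ := hNne
      have e1 : F₁ = F₀ := by
        have := Finset.mem_union_left N hF₁
        rw [hsing, Finset.mem_singleton] at this
        exact this
      have e2 : G₁ = F₀ := by
        have := Finset.mem_union_right M hG₁
        rw [hsing, Finset.mem_singleton] at this
        exact this
      exact hcom F₁ hF₁ (by rw [e1, ← e2]; exact hG₁)
    · rcases Finset.mem_union.mp hF₀S with hF₀M | hF₀N
      · exact SFP.path_leaf hpure ht hk h hMf hMp hMc hNf hNp hNc hcom hF₀M hJS hJne hleaf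
          hMm hNm
      · have hJS' : J ∈ N ∪ M := by rwa [Finset.union_comm]
        have hleaf' : ∀ H ∈ N ∪ M, H ≠ F₀ → H ∩ F₀ ⊆ J ∩ F₀ := fun H hH => by
          rw [Finset.union_comm] at hH
          exact hleaf H hH
        have hp := SFP.path_leaf hpure ht hk h hNf hNp hNc hMf hMp hMc
          (fun x hx hx' => hcom x hx' hx) hF₀N hJS' hJne hleaf' hNm hMm
        exact @Std.Symm.symm _ _ (@Relation.ReflTransGen.stdSymm _ _ ⟨fun a b hab => SFP.edgeRel_symm hab⟩) _ _ hp


end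
end
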